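/- Let 𝒜 be a saturated class of morphisms of marked simplicial sets, all of whose underlying maps are monomorphisms, having the right cancellation property, and containing (1) all maps A^♭ ↪ B^♭ for A → B inner anodyne, and (2) all ℒ-marked left spine inclusions L_n^ℒ ↪ (Δⁿ)^ℒ for n ≥ 2. Then 𝒜 contains all ℒ-marked left horn inclusions (Λⁿ₀)^ℒ ↪ (Δⁿ)^ℒ for n ≥ 2. -/

import Mathlib

set_option linter.unusedVariables false

open CategoryTheory CategoryTheory.Limits Simplicial Opposite

namespace Paper

abbrev BSSet : Type 1 := SimplexCategoryᵒᵖ × SimplexCategoryᵒᵖ ⥤ Type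

@[simps]
def boxObj (A B : SSet.{0}) : BSSet where
  obj p := A.obj p.1 × B.obj p.2
  map f := TypeCat.ofHom fun x => (A.map f.1 x.1, B.map f.2 x.2)
  map_id p := by ext x <;> simp
  map_comp f g := by ext x <;> simp

@[simps]
def boxMap {A A' B B' : SSet.{0}} (u : A ⟶ A') (v : B ⟶ B') :
    boxObj A B ⟶ boxObj A' B' where
  app p := TypeCat.ofHom fun x => (u.app p.1 x.1, v.app p.2 x.2)
  naturality p q φ := by
    apply ConcreteCategory.hom_ext
    intro x
    refine Prod.ext ?_ ?_
    exacts [types_congr_hom (u.naturality φ.1) x.1, types_congr_hom (v.naturality φ.2) x.2]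

lemma boxMap_id (A B : SSet.{0}) : boxMap (𝟙 A) (𝟙 B) = 𝟙 (boxObj A B) := rfl

lemma boxMap_comp {A A' A'' B B' B'' : SSet.{0}} (u : A ⟶ A') (u' : A' ⟶ A'')
    (v : B ⟶ B') (v' : B' ⟶ B'') :
    boxMap (u ≫ u') (v ≫ v') = boxMap u v ≫ boxMap u' v' := rfl

def under (A : SSet.{0}) (X : BSSet) : SSet.{0} where
  obj n := boxObj A (SSet.stdSimplex.obj n.unop) ⟶ X
  map φ := TypeCat.ofHom fun σ => boxMap (𝟙 A) (SSet.stdSimplex.map φ.unop) ≫ σ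
  map_id n := by
    apply ConcreteCategory.hom_ext
    intro σ
    show boxMap (𝟙 A) (SSet.stdSimplex.map (𝟙 n.unop)) ≫ σ = σ
    rw [CategoryTheory.Functor.map_id (self := SSet.stdSimplex), boxMap_id, Category.id_comp]
  map_comp {n m k} φ ψ := by
    apply ConcreteCategory.hom_ext
    intro σ
    show boxMap (𝟙 A) (SSet.stdSimplex.map (ψ.unop ≫ φ.unop)) ≫ σ = _
    rw [Functor.map_comp (self := SSet.stdSimplex), show (𝟙 A : A ⟶ A) = 𝟙 A ≫ 𝟙 A from (Category.id_comp _).symm,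
      boxMap_comp, Category.assoc]
    rfl

def over' (X : BSSet) (B : SSet.{0}) : SSet.{0} where
  obj n := boxObj (SSet.stdSimplex.obj n.unop) B ⟶ X
  map φ := TypeCat.ofHom fun σ => boxMap (SSet.stdSimplex.map φ.unop) (𝟙 B) ≫ σ
  map_id n := by
    apply ConcreteCategory.hom_ext
    intro σ
    show boxMap (SSet.stdSimplex.map (𝟙 n.unop)) (𝟙 B) ≫ σ = σ
    rw [CategoryTheory.Functor.map_id (self := SSet.stdSimplex), boxMap_id, Category.id_comp]
  map_comp {n m k} φ ψ := by
    apply ConcreteCategory.hom_ext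
    intro σ
    show boxMap (SSet.stdSimplex.map (ψ.unop ≫ φ.unop)) (𝟙 B) ≫ σ = _
    rw [Functor.map_comp (self := SSet.stdSimplex), show (𝟙 B : B ⟶ B) = 𝟙 B ≫ 𝟙 B from (Category.id_comp _).symm,
      boxMap_comp, Category.assoc]
    rfl

@[simps]
def underWhisker {A A' : SSet.{0}} (u : A ⟶ A') (X : BSSet) :
    under A' X ⟶ under A X where
  app n := TypeCat.ofHom fun σ => boxMap u (𝟙 _) ≫ σ
  naturality n m φ := rfl

@[simps]
def underPush (A : SSet.{0}) {X Y : BSSet} (f : X ⟶ Y) :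
    under A X ⟶ under A Y where
  app n := TypeCat.ofHom fun σ => σ ≫ f
  naturality n m φ := rfl

@[simps]
def overPush (B : SSet.{0}) {X Y : BSSet} (f : X ⟶ Y) :
    over' X B ⟶ over' Y B where
  app n := TypeCat.ofHom fun σ => σ ≫ f
  naturality n m φ := rfl

---- new chunk

/-- The functor `A □ - : SSet ⥤ BSSet`. -/
@[simps]
def boxLFunctor (A : SSet.{0}) : SSet.{0} ⥤ BSSet where
  obj B := boxObj A B
  map v := boxMap (𝟙 A) v
  map_id B := rfl
  map_comp v w := rfl

/-- The functor `- □ B : SSet ⥤ BSSet`. -/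
@[simps]
def boxRFunctor (B : SSet.{0}) : SSet.{0} ⥤ BSSet where
  obj A := boxObj A B
  map u := boxMap u (𝟙 B)
  map_id A := rfl
  map_comp u w := rfl

/-- The functor `A \ - : BSSet ⥤ SSet`. -/
@[simps]
def underFunctor (A : SSet.{0}) : BSSet ⥤ SSet.{0} where
  obj X := under A X
  map f := underPush A f
  map_id X := rfl
  map_comp f g := rfl

/-- The functor `- / B : BSSet ⥤ SSet`. -/
@[simps]
def overFunctor (B : SSet.{0}) : BSSet ⥤ SSet.{0} where
  obj X := over' X B
  map f := overPush B f
  map_id X := rfl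
  map_comp f g := rfl

/-- A map of simplicial sets is a Kan fibration if it has the right lifting property
with respect to all horn inclusions `Λ[n, i] ⟶ Δ[n]`, `n ≥ 1`, `0 ≤ i ≤ n`. -/
def IsKanFibration {S T : SSet.{0}} (f : S ⟶ T) : Prop :=
  ∀ (n : ℕ) (i : Fin (n + 2)), HasLiftingProperty (Λ[n + 1, i].ι) f

/-- A map of simplicial sets is a trivial Kan fibration if it has the right lifting property
with respect to all boundary inclusions `∂Δ[n] ⟶ Δ[n]`. -/
def IsTrivialKanFibration {S T : SSet.{0}} (f : S ⟶ T) : Prop :=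
  ∀ (n : ℕ), HasLiftingProperty (∂Δ[n].ι) f

/-- A map of simplicial sets is an inner fibration if it has the right lifting property
with respect to all inner horn inclusions `Λ[n, i] ⟶ Δ[n]`, `0 < i < n`. -/
def IsInnerFibration {S T : SSet.{0}} (f : S ⟶ T) : Prop :=
  ∀ (n : ℕ) (i : Fin (n + 1)), 0 < (i : ℕ) → (i : ℕ) < n →
    HasLiftingProperty (Λ[n, i].ι) f

lemma underSq {A A' : SSet.{0}} (u : A ⟶ A') {X Y : BSSet} (f : X ⟶ Y) :
    underWhisker u X ≫ underPush A f = underPush A' f ≫ underWhisker u Y := rfl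

/-- The gap map `⟨u \ f⟩ : A' \ X ⟶ A \ X ×_{A \ Y} A' \ Y`. -/
noncomputable def underGap {A A' : SSet.{0}} (u : A ⟶ A') {X Y : BSSet} (f : X ⟶ Y) :
    under A' X ⟶ pullback (underPush A f) (underWhisker u Y) :=
  pullback.lift (underWhisker u X) (underPush A' f) (underSq u f)

/-- A map of bisimplicial sets is a Reedy fibration if for every monomorphism `u : A ⟶ A'`
of simplicial sets, the gap map `⟨u \ f⟩` is a Kan fibration. -/
def IsReedyFibration {X Y : BSSet} (f : X ⟶ Y) : Prop :=
  ∀ ⦃A A' : SSet.{0}⦄ (u : A ⟶ A'), Mono u → IsKanFibration (underGap u f)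

/-- A bisimplicial set is Reedy fibrant if for every monomorphism `u : A ⟶ A'` of
simplicial sets, the restriction map `⟨u \ X⟩ : A' \ X ⟶ A \ X` is a Kan fibration. -/
def IsReedyFibrant (X : BSSet) : Prop :=
  ∀ ⦃A A' : SSet.{0}⦄ (u : A ⟶ A'), Mono u → IsKanFibration (underWhisker u X)

/-- The cylinder `A × Δ¹` on a simplicial set. -/
def cyl (A : SSet.{0}) : SSet.{0} where
  obj n := A.obj n × Δ[1].obj n
  map f := TypeCat.ofHom fun x => (A.map f x.1, Δ[1].map f x.2)
  map_id n := by ext x <;> simp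
  map_comp f g := by ext x <;> simp

/-- The inclusion `A ⟶ A × Δ¹` at the vertex `k` of `Δ¹`. -/
def cylIncl (k : Fin 2) (A : SSet.{0}) : A ⟶ cyl A where
  app n := TypeCat.ofHom fun a => (a, SSet.stdSimplex.const 1 k n)
  naturality n m f := rfl

/-- Functoriality of the cylinder. -/
def cylMap {A B : SSet.{0}} (f : A ⟶ B) : cyl A ⟶ cyl B where
  app n := TypeCat.ofHom fun x => (f.app n x.1, x.2)
  naturality n m φ := by
    apply ConcreteCategory.hom_ext
    intro x
    refine Prod.ext ?_ ?_
    exacts [types_congr_hom (f.naturality φ) x.1, rfl]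

lemma cylIncl_cylMap (k : Fin 2) {A B : SSet.{0}} (f : A ⟶ B) :
    cylIncl k A ≫ cylMap f = f ≫ cylIncl k B := rfl

/-- Two maps of simplicial sets are related by an elementary homotopy if there is a
cylinder homotopy from one to the other. -/
def HomotopicOne {A B : SSet.{0}} (f g : A ⟶ B) : Prop :=
  ∃ H : cyl A ⟶ B, cylIncl 0 A ≫ H = f ∧ cylIncl 1 A ≫ H = g

/-- A Kan complex: every horn has a filler. -/
def IsKanComplex (S : SSet.{0}) : Prop :=
  ∀ (n : ℕ) (i : Fin (n + 2)) (g : (Λ[n + 1, i] : SSet) ⟶ S),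
    ∃ h : Δ[n + 1] ⟶ S, Λ[n + 1, i].ι ≫ h = g

/-- Precomposition on homotopy classes of maps. -/
def precompClass {A B : SSet.{0}} (f : A ⟶ B) (Z : SSet.{0}) :
    Quot (@HomotopicOne B Z) → Quot (@HomotopicOne A Z) :=
  Quot.lift (fun g => Quot.mk _ (f ≫ g)) (by
    rintro g g' ⟨H, h0, h1⟩
    apply Quot.sound
    refine ⟨cylMap f ≫ H, ?_, ?_⟩
    · rw [← Category.assoc, cylIncl_cylMap, Category.assoc, h0]
    · rw [← Category.assoc, cylIncl_cylMap, Category.assoc, h1])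

/-- A map of simplicial sets is a weak homotopy equivalence iff for every Kan complex `Z`
the induced map on homotopy classes of maps into `Z` is a bijection. -/
def WeakEquiv {A B : SSet.{0}} (f : A ⟶ B) : Prop :=
  ∀ Z : SSet.{0}, IsKanComplex Z → Function.Bijective (precompClass f Z)

/-- A commutative square of simplicial sets (with `g` thought of as the right-hand vertical
map) is a homotopy pullback if for some factorization of `g` as a weak equivalence followed
by a Kan fibration, the induced gap map to the strict pullback is a weak equivalence. -/
noncomputable def IsHomotopyPullback {W U V Z : SSet.{0}}
    (a : W ⟶ U) (b : W ⟶ V) (g : U ⟶ Z) (h : V ⟶ Z) (comm : a ≫ g = b ≫ h) : Prop :=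
  ∃ (U' : SSet.{0}) (w : U ⟶ U') (p : U' ⟶ Z) (hwp : w ≫ p = g),
    WeakEquiv w ∧ IsKanFibration p ∧
      WeakEquiv (pullback.lift (a ≫ w) b
        (by rw [Category.assoc, hwp, comm]) : W ⟶ pullback p h)

/-- The spine of `Δ[n]`: the union of the edges `Δ{i, i+1}`. -/
def spine (n : ℕ) : SSet.{0} where
  obj m := { a : Δ[n].obj m //
    ∃ i : ℕ, ∀ j, ((SSet.stdSimplex.asOrderHom a) j : ℕ) = i ∨ ((SSet.stdSimplex.asOrderHom a) j : ℕ) = i + 1 }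
  map f := TypeCat.ofHom fun a => ⟨Δ[n].map f a.1, by
    obtain ⟨i, hi⟩ := a.2
    exact ⟨i, fun j => hi _⟩⟩
  map_id m := by
    apply ConcreteCategory.hom_ext
    intro a
    apply Subtype.ext
    show Δ[n].map (𝟙 m) a.1 = a.1
    simp
  map_comp f g := by
    apply ConcreteCategory.hom_ext
    intro a
    apply Subtype.ext
    show Δ[n].map (f ≫ g) a.1 = Δ[n].map g (Δ[n].map f a.1)
    simp

def spineIncl (n : ℕ) : spine n ⟶ Δ[n] where
  app m := TypeCat.ofHom fun a => a.1
  naturality n m f := rfl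


/-- A Segal space: a Reedy fibrant bisimplicial set whose Segal maps
`X_n ⟶ X_1 ×_{X_0} ⋯ ×_{X_0} X_1` (i.e. the restrictions `Δⁿ \\ X ⟶ Iₙ \\ X` along the
spine inclusions) are weak homotopy equivalences for `n ≥ 2`. -/
def IsSegalSpace (X : BSSet) : Prop :=
  IsReedyFibrant X ∧ ∀ n : ℕ, 2 ≤ n → WeakEquiv (underWhisker (spineIncl n) X)

/-- The unique map to `⦋0⦌` in the simplex category. -/
def toZero (m : SimplexCategory) : m ⟶ ⦋0⦌ :=
  SimplexCategory.Hom.mk ⟨fun _ => 0, fun _ _ _ => le_rfl⟩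

lemma toZero_unique {m : SimplexCategory} (f g : m ⟶ ⦋0⦌) : f = g := by
  apply SimplexCategory.Hom.ext
  apply OrderHom.ext
  funext j
  apply Fin.ext
  have h1 : ((f.toOrderHom j : Fin (⦋0⦌.len + 1)) : ℕ) < 0 + 1 := (f.toOrderHom j).isLt
  have h2 : ((g.toOrderHom j : Fin (⦋0⦌.len + 1)) : ℕ) < 0 + 1 := (g.toOrderHom j).isLt
  omega

lemma toZero_comp {m m' : SimplexCategory} (φ : m' ⟶ m) :
    φ ≫ toZero m = toZero m' :=
  toZero_unique _ _

lemma boxMapR_comp (A : SSet.{0}) {B B' B'' : SSet.{0}} (v : B ⟶ B') (w : B' ⟶ B'') :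
    boxMap (𝟙 A) (v ≫ w) = boxMap (𝟙 A) v ≫ boxMap (𝟙 A) w := rfl

/-- The map `Δ[1] □ Δ[0] ⟶ X` corresponding to an element `e ∈ X_{1,0}` by the Yoneda lemma. -/
def yonedaBox {X : BSSet} (e : X.obj (op ⦋1⦌, op ⦋0⦌)) :
    boxObj Δ[1] Δ[0] ⟶ X where
  app p := TypeCat.ofHom fun x =>
    X.map ((SSet.stdSimplex.objEquiv x.1).op,
      (SSet.stdSimplex.objEquiv x.2).op) e
  naturality p q φ := by
    apply ConcreteCategory.hom_ext
    intro x
    exact FunctorToTypes.map_comp_apply X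
      ((SSet.stdSimplex.objEquiv x.1).op, (SSet.stdSimplex.objEquiv x.2).op) φ e

def fApp {X Y : BSSet} (f : X ⟶ Y) (e : X.obj (op ⦋1⦌, op ⦋0⦌)) : Y.obj (op ⦋1⦌, op ⦋0⦌) :=
  f.app (op ⦋1⦌, op ⦋0⦌) e

lemma yonedaBox_comp {X Y : BSSet} (f : X ⟶ Y) (e : X.obj (op ⦋1⦌, op ⦋0⦌)) :
    yonedaBox e ≫ f = yonedaBox (fApp f e) := by
  apply NatTrans.ext
  funext p
  ext x
  exact types_congr_hom (f.naturality _) e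

/-- The constant `Δ[1] □ Δ[m]`-diagram in `X` with value the edge `e`. -/
def eConst {X : BSSet} (m : SimplexCategory) (e : X.obj (op ⦋1⦌, op ⦋0⦌)) :
    boxObj Δ[1] (SSet.stdSimplex.obj m) ⟶ X :=
  boxMap (𝟙 Δ[1]) (SSet.stdSimplex.map (toZero m)) ≫ yonedaBox e

lemma eConst_whisker {X : BSSet} {m m' : SimplexCategory} (φ : m' ⟶ m)
    (e : X.obj (op ⦋1⦌, op ⦋0⦌)) :
    boxMap (𝟙 Δ[1]) (SSet.stdSimplex.map φ) ≫ eConst m e = eConst m' e := by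
  rw [eConst, eConst, ← Category.assoc, ← boxMapR_comp, ← Functor.map_comp (self := SSet.stdSimplex), toZero_comp]

lemma eConst_comp {X Y : BSSet} (f : X ⟶ Y) {m : SimplexCategory}
    (e : X.obj (op ⦋1⦌, op ⦋0⦌)) :
    eConst m e ≫ f = eConst m (fApp f e) := by
  rw [eConst, eConst, Category.assoc, yonedaBox_comp]

/-- `(B \ X)^e`: the simplicial set of `B`-shaped diagrams in `X` whose restriction along the
edge `ι : Δ[1] ⟶ B` is constant at the edge `e ∈ X_{1,0}`. -/
def fib {B : SSet.{0}} (ι : Δ[1] ⟶ B) (X : BSSet) (e : X.obj (op ⦋1⦌, op ⦋0⦌)) :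
    SSet.{0} where
  obj n := { σ : boxObj B (SSet.stdSimplex.obj n.unop) ⟶ X //
      boxMap ι (𝟙 _) ≫ σ = eConst n.unop e }
  map {n m} φ := TypeCat.ofHom fun σ => ⟨boxMap (𝟙 B) (SSet.stdSimplex.map φ.unop) ≫ σ.1, by
    rw [← Category.assoc,
      show boxMap ι (𝟙 _) ≫ boxMap (𝟙 B) (SSet.stdSimplex.map φ.unop)
        = boxMap (𝟙 Δ[1]) (SSet.stdSimplex.map φ.unop) ≫ boxMap ι (𝟙 _) from rfl,
      Category.assoc, σ.2, eConst_whisker]⟩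
  map_id n := by
    apply ConcreteCategory.hom_ext
    intro σ
    apply Subtype.ext
    show boxMap (𝟙 B) (SSet.stdSimplex.map (𝟙 n.unop)) ≫ σ.1 = σ.1
    rw [CategoryTheory.Functor.map_id (self := SSet.stdSimplex), boxMap_id, Category.id_comp]
  map_comp {n m k} φ ψ := by
    apply ConcreteCategory.hom_ext
    intro σ
    apply Subtype.ext
    show boxMap (𝟙 B) (SSet.stdSimplex.map (ψ.unop ≫ φ.unop)) ≫ σ.1 = _
    rw [Functor.map_comp (self := SSet.stdSimplex), boxMapR_comp, Category.assoc]
    rfl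

/-- The forgetful map `(B \ X)^e ⟶ B \ X`. -/
def fibFst {B : SSet.{0}} (ι : Δ[1] ⟶ B) (X : BSSet) (e : X.obj (op ⦋1⦌, op ⦋0⦌)) :
    fib ι X e ⟶ under B X where
  app n := TypeCat.ofHom fun σ => σ.1
  naturality n m φ := rfl

/-- Restriction `(B' \ X)^e ⟶ (B \ X)^e` along `u : B ⟶ B'`. -/
def fibRes {B B' : SSet.{0}} (u : B ⟶ B') (ι : Δ[1] ⟶ B) (X : BSSet)
    (e : X.obj (op ⦋1⦌, op ⦋0⦌)) :
    fib (ι ≫ u) X e ⟶ fib ι X e where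
  app n := TypeCat.ofHom fun σ => ⟨boxMap u (𝟙 _) ≫ σ.1, by
    rw [← Category.assoc,
      show boxMap ι (𝟙 _) ≫ boxMap u (𝟙 _) = boxMap (ι ≫ u) (𝟙 _) from rfl, σ.2]⟩
  naturality n m φ := rfl

/-- Pushforward `(B \ X)^e ⟶ (B \ Y)^{f(e)}` along `f : X ⟶ Y`. -/
def fibPush {B : SSet.{0}} (ι : Δ[1] ⟶ B) {X Y : BSSet} (f : X ⟶ Y)
    (e : X.obj (op ⦋1⦌, op ⦋0⦌)) :
    fib ι X e ⟶ fib ι Y (fApp f e) where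
  app n := TypeCat.ofHom fun σ => ⟨σ.1 ≫ f, by rw [← Category.assoc, σ.2, eConst_comp]⟩
  naturality n m φ := rfl

lemma fibSq {B B' : SSet.{0}} (u : B ⟶ B') (ι : Δ[1] ⟶ B) {X Y : BSSet} (f : X ⟶ Y)
    (e : X.obj (op ⦋1⦌, op ⦋0⦌)) :
    fibRes u ι X e ≫ fibPush ι f e = fibPush (ι ≫ u) f e ≫ fibRes u ι Y (fApp f e) := rfl

/-- The given square of fibered diagram spaces (restriction on top of pushforward)
is a homotopy pullback. -/
noncomputable def IsCocartAlong {B B' : SSet.{0}} (u : B ⟶ B') (ι : Δ[1] ⟶ B)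
    {X Y : BSSet} (f : X ⟶ Y) (e : X.obj (op ⦋1⦌, op ⦋0⦌)) : Prop :=
  IsHomotopyPullback (fibRes u ι X e) (fibPush (ι ≫ u) f e)
    (fibPush ι f e) (fibRes u ι Y (fApp f e)) (fibSq u ι f e)

/-- The gap map `(B' \ X)^e ⟶ (B \ X)^e ×_{(B \ Y)^{f(e)}} (B' \ Y)^{f(e)}`. -/
noncomputable def fibGap {B B' : SSet.{0}} (u : B ⟶ B') (ι : Δ[1] ⟶ B) {X Y : BSSet}
    (f : X ⟶ Y) (e : X.obj (op ⦋1⦌, op ⦋0⦌)) :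
    fib (ι ≫ u) X e ⟶ pullback (fibPush ι f e) (fibRes u ι Y (fApp f e)) :=
  pullback.lift (fibRes u ι X e) (fibPush (ι ≫ u) f e) (fibSq u ι f e)

/-- The morphism `⦋1⦌ ⟶ ⦋n⦌` in the simplex category given by `0 ↦ 0`, `1 ↦ 1`. -/
def edge01Hom (n : ℕ) (h : 1 ≤ n) : (⦋1⦌ : SimplexCategory) ⟶ ⦋n⦌ :=
  SimplexCategory.Hom.mk ⟨Fin.castLE (by simp only [SimplexCategory.len_mk]; omega),
    (Fin.strictMono_castLE _).monotone⟩

/-- The edge `Δ^{0,1} ⟶ Δⁿ`. -/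
def edge01 (n : ℕ) (h : 1 ≤ n) : Δ[1] ⟶ Δ[n] :=
  SSet.stdSimplex.map (edge01Hom n h)

/-- The edge `Δ^{0,1} ⟶ Λ[n, 0]` of the left horn. -/
def edgeHorn (n : ℕ) (h : 2 ≤ n) : Δ[1] ⟶ (Λ[n, 0] : SSet) where
  app m := TypeCat.ofHom fun a => ⟨(edge01 n (by omega)).app m a, by
    rw [SSet.mem_horn_iff]
    intro hEq
    have h2 : (⟨2, by omega⟩ : Fin (n + 1)) ∈
        Set.range (SSet.stdSimplex.asOrderHom ((edge01 n (by omega)).app m a)) ∪ {0} := by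
      rw [hEq]; exact Set.mem_univ _
    rcases h2 with ⟨j, hj⟩ | h0
    · have hsmall : ((SSet.stdSimplex.asOrderHom ((edge01 n (by omega)).app m a)) j : ℕ) < 2 :=
        ((SSet.stdSimplex.asOrderHom a) j).isLt
      have hv : ((SSet.stdSimplex.asOrderHom ((edge01 n (by omega)).app m a)) j : ℕ) = 2 :=
        congrArg Fin.val hj
      omega
    · rw [Set.mem_singleton_iff] at h0
      have := congrArg Fin.val h0
      simp at this⟩
  naturality m m' φ := by
    apply ConcreteCategory.hom_ext
    intro a
    apply Subtype.ext
    exact types_congr_hom ((edge01 n (by omega)).naturality φ) a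

lemma edgeHorn_incl (n : ℕ) (h : 2 ≤ n) :
    edgeHorn n h ≫ Λ[n, 0].ι = edge01 n (by omega) := rfl

/-- A morphism `e ∈ X_{1,0}` is `f`-cocartesian if the square
`(Δ² \ X)^e → (Λ²₀ \ X)^e` over `(Δ² \ Y)^{f(e)} → (Λ²₀ \ Y)^{f(e)}` is a homotopy
pullback. -/
noncomputable def IsCocartesianEdge {X Y : BSSet} (f : X ⟶ Y)
    (e : X.obj (op ⦋1⦌, op ⦋0⦌)) : Prop :=
  IsCocartAlong (Λ[2, 0].ι) (edgeHorn 2 (by omega)) f e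

/-- Abbreviation for `op [k]`. -/
abbrev sc (k : ℕ) : SimplexCategoryᵒᵖ := op (SimplexCategory.mk k)

lemma fibFst_push {B : SSet.{0}} (ι : Δ[1] ⟶ B) {X Y : BSSet} (f : X ⟶ Y)
    (e : X.obj (op ⦋1⦌, op ⦋0⦌)) :
    fibFst ι X e ≫ underPush B f = fibPush ι f e ≫ fibFst ι Y (fApp f e) := rfl

lemma fibFst_whisker {B B' : SSet.{0}} (u : B ⟶ B') (ι : Δ[1] ⟶ B) (X : BSSet)
    (e : X.obj (op ⦋1⦌, op ⦋0⦌)) :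
    fibFst (ι ≫ u) X e ≫ underWhisker u X = fibRes u ι X e ≫ fibFst ι X e := rfl

/-- The forgetful map
`(B' \ Y)^{f(e)} ×_{(B \ Y)^{f(e)}} (B \ X)^e ⟶ B' \ Y ×_{B \ Y} B \ X`
(with the pullbacks written in the other order). -/
noncomputable def fibForget {B B' : SSet.{0}} (u : B ⟶ B') (ι : Δ[1] ⟶ B) {X Y : BSSet}
    (f : X ⟶ Y) (e : X.obj (op ⦋1⦌, op ⦋0⦌)) :
    pullback (fibPush ι f e) (fibRes u ι Y (fApp f e)) ⟶
      pullback (underPush B f) (underWhisker u Y) :=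
  pullback.lift
    (pullback.fst _ _ ≫ fibFst ι X e)
    (pullback.snd _ _ ≫ fibFst (ι ≫ u) Y (fApp f e))
    (by
      rw [Category.assoc, Category.assoc, fibFst_push, fibFst_whisker,
        ← Category.assoc, ← Category.assoc, pullback.condition])

/-- The left spine `Lₙ ⊆ Δⁿ`: the union of the edge `Δ^{0,1}` with the spine
`Δ^{0,2} ∪ Δ^{2,3} ∪ ⋯ ∪ Δ^{n-1,n}` of the face `d₁Δⁿ`. -/
def leftSpine (n : ℕ) : SSet.{0} where
  obj m := { a : Δ[n].obj m //
    (∀ j, ((SSet.stdSimplex.asOrderHom a) j : ℕ) ≤ 1) ∨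
    (∀ j, ((SSet.stdSimplex.asOrderHom a) j : ℕ) = 0 ∨ ((SSet.stdSimplex.asOrderHom a) j : ℕ) = 2) ∨
    (∃ i : ℕ, 2 ≤ i ∧
      ∀ j, ((SSet.stdSimplex.asOrderHom a) j : ℕ) = i ∨ ((SSet.stdSimplex.asOrderHom a) j : ℕ) = i + 1) }
  map {m m'} φ := TypeCat.ofHom fun a => ⟨Δ[n].map φ a.1, by
    rcases a.2 with h | h | ⟨i, h2, h⟩
    exacts [Or.inl fun j => h _, Or.inr (Or.inl fun j => h _),
      Or.inr (Or.inr ⟨i, h2, fun j => h _⟩)]⟩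
  map_id m := by
    apply ConcreteCategory.hom_ext
    intro a
    apply Subtype.ext
    show Δ[n].map (𝟙 m) a.1 = a.1
    simp
  map_comp φ ψ := by
    apply ConcreteCategory.hom_ext
    intro a
    apply Subtype.ext
    show Δ[n].map (φ ≫ ψ) a.1 = Δ[n].map ψ (Δ[n].map φ a.1)
    simp

def leftSpineIncl (n : ℕ) : leftSpine n ⟶ Δ[n] where
  app m := TypeCat.ofHom fun a => a.1
  naturality m m' φ := rfl

/-- The edge `Δ^{0,1} ⟶ Lₙ`. -/
def edgeLeftSpine (n : ℕ) (h : 1 ≤ n) : Δ[1] ⟶ leftSpine n where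
  app m := TypeCat.ofHom fun a => ⟨(edge01 n h).app m a,
    Or.inl fun j => Nat.lt_succ_iff.mp ((SSet.stdSimplex.asOrderHom a) j).isLt⟩
  naturality m m' φ := by
    apply ConcreteCategory.hom_ext
    intro a
    apply Subtype.ext
    exact types_congr_hom ((edge01 n h).naturality φ) a

lemma edgeLeftSpine_incl (n : ℕ) (h : 1 ≤ n) :
    edgeLeftSpine n h ≫ leftSpineIncl n = edge01 n h := rfl

/-- The `m`-th column `X_m` of a bisimplicial set, as a simplicial set. -/
def col (X : BSSet) (m : SimplexCategory) : SSet.{0} where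
  obj n := X.obj (op m, n)
  map {n n'} g := TypeCat.ofHom fun x => X.map (𝟙 (op m), g) x
  map_id n := by
    apply ConcreteCategory.hom_ext
    intro x
    exact FunctorToTypes.map_id_apply X x
  map_comp {n n' n''} g h := by
    apply ConcreteCategory.hom_ext
    intro x
    exact FunctorToTypes.map_comp_apply X
      ((𝟙 (op m), g) : (op m, n) ⟶ (op m, n'))
      ((𝟙 (op m), h) : (op m, n') ⟶ (op m, n'')) x

/-- Horizontal face of an edge `e ∈ X_{1,0}`: `hface 1 e` is the source vertex and
`hface 0 e` the target vertex. -/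
def hface {X : BSSet} (i : Fin 2) (e : X.obj (op ⦋1⦌, op ⦋0⦌)) : X.obj (op ⦋0⦌, op ⦋0⦌) :=
  X.map ((((SimplexCategory.δ i).op : sc 1 ⟶ sc 0), 𝟙 (sc 0)) :
    (sc 1, sc 0) ⟶ (sc 0, sc 0)) e

/-- The degenerate (identity) edge on a vertex `x ∈ X_{0,0}`. -/
def hdegen {X : BSSet} (x : X.obj (op ⦋0⦌, op ⦋0⦌)) : X.obj (op ⦋1⦌, op ⦋0⦌) :=
  X.map ((((SimplexCategory.σ 0).op : sc 0 ⟶ sc 1), 𝟙 (sc 0)) :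
    (sc 0, sc 0) ⟶ (sc 1, sc 0)) x

/-- Vertical face of `h ∈ X_{1,1}`: `vface 1 h` and `vface 0 h` are the two endpoints of the
path `h` in the space `X_1`. -/
def vface {X : BSSet} (i : Fin 2) (h : X.obj (op ⦋1⦌, op ⦋1⦌)) : X.obj (op ⦋1⦌, op ⦋0⦌) :=
  X.map ((𝟙 (sc 1), ((SimplexCategory.δ i).op : sc 1 ⟶ sc 0)) :
    (sc 1, sc 1) ⟶ (sc 1, sc 0)) h

/-- Horizontal faces of a `2`-simplex `τ ∈ X_{2,0}`. -/
def hface2 {X : BSSet} (i : Fin 3) (τ : X.obj (op ⦋2⦌, op ⦋0⦌)) : X.obj (op ⦋1⦌, op ⦋0⦌) :=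
  X.map ((((SimplexCategory.δ i).op : sc 2 ⟶ sc 1), 𝟙 (sc 0)) :
    (sc 2, sc 0) ⟶ (sc 1, sc 0)) τ

/-- Two edges are connected by a path in the space `X_1` . -/
def PathConn (X : BSSet) : X.obj (op ⦋1⦌, op ⦋0⦌) → X.obj (op ⦋1⦌, op ⦋0⦌) → Prop :=
  Relation.EqvGen (fun e e' => ∃ h : X.obj (op ⦋1⦌, op ⦋1⦌), vface 1 h = e ∧ vface 0 h = e')

/-- A homotopy equivalence in a Segal space, in the sense of Rezk: an edge admitting a right
inverse and a left inverse up to homotopy. -/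
def IsHomotopyEquivalenceEdge (X : BSSet) (e : X.obj (op ⦋1⦌, op ⦋0⦌)) : Prop :=
  (∃ (g : X.obj (op ⦋1⦌, op ⦋0⦌)) (τ : X.obj (op ⦋2⦌, op ⦋0⦌)),
    hface2 2 τ = g ∧ hface2 0 τ = e ∧ PathConn X (hface2 1 τ) (hdegen (hface 1 g))) ∧
  (∃ (g' : X.obj (op ⦋1⦌, op ⦋0⦌)) (τ' : X.obj (op ⦋2⦌, op ⦋0⦌)),
    hface2 2 τ' = e ∧ hface2 0 τ' = g' ∧ PathConn X (hface2 1 τ') (hdegen (hface 1 e)))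

/-- A cocartesian edge in the quasicategorical sense, for a map `π : C ⟶ D` of simplicial
sets: all left horns (for `n ≥ 2`) whose initial edge is `c`, together with a filler
downstairs, can be filled upstairs. -/
def QCocartesianEdge {C D : SSet.{0}} (π : C ⟶ D) (c : C.obj (op ⦋1⦌)) : Prop :=
  ∀ (n : ℕ) (hn : 2 ≤ n) (g : (Λ[n, 0] : SSet) ⟶ C) (d : Δ[n] ⟶ D),
    SSet.yonedaEquiv (edgeHorn n hn ≫ g) = c →
    g ≫ π = Λ[n, 0].ι ≫ d →
    ∃ h : Δ[n] ⟶ C, Λ[n, 0].ι ≫ h = g ∧ h ≫ π = d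

/-- A cocartesian fibration of quasicategories: an inner fibration such that every edge
downstairs with a lift of its source admits a cocartesian lift. -/
def IsQCocartesianFibration {C D : SSet.{0}} (π : C ⟶ D) : Prop :=
  IsInnerFibration π ∧
  ∀ (σ : D.obj (op ⦋1⦌)) (x : C.obj (op ⦋0⦌)),
    π.app (op ⦋0⦌) x = D.map (SimplexCategory.δ 1).op σ →
    ∃ c : C.obj (op ⦋1⦌), QCocartesianEdge π c ∧ π.app (op ⦋1⦌) c = σ ∧
      C.map (SimplexCategory.δ 1).op c = x

/-- A cocartesian fibration between Segal spaces: a Reedy fibration such that every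
morphism of `Y` with a lift of its source vertex admits an `f`-cocartesian lift. -/
noncomputable def IsCocartesianFibration {X Y : BSSet} (f : X ⟶ Y) : Prop :=
  IsReedyFibration f ∧
  ∀ (σ : Y.obj (op ⦋1⦌, op ⦋0⦌)) (x : X.obj (op ⦋0⦌, op ⦋0⦌)),
    f.app (op ⦋0⦌, op ⦋0⦌) x = hface 1 σ →
    ∃ e : X.obj (op ⦋1⦌, op ⦋0⦌), IsCocartesianEdge f e ∧ fApp f e = σ ∧ hface 1 e = x

/-- The identity `m`-simplex of the standard simplex `Δ^m`. -/
def idSimplex (m : SimplexCategory) : (SSet.stdSimplex.{0}.obj m).obj (op m) :=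
  (SSet.stdSimplex.objEquiv (n := m) (m := op m)).symm (𝟙 m)

/-- A marked simplicial set: a simplicial set together with a set of marked edges
containing all degenerate edges. -/
structure MSSet : Type 1 where
  carrier : SSet.{0}
  marked : Set (carrier.obj (op ⦋1⦌))
  degen_marked : ∀ x : carrier.obj (op ⦋0⦌),
    carrier.map ((SimplexCategory.σ 0).op : sc 0 ⟶ sc 1) x ∈ marked

instance : Category MSSet where
  Hom A B := { g : A.carrier ⟶ B.carrier // ∀ a ∈ A.marked, g.app (op ⦋1⦌) a ∈ B.marked }
  id A := ⟨𝟙 A.carrier, fun _ ha => ha⟩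
  comp f g := ⟨f.1 ≫ g.1, fun a ha => g.2 _ (f.2 a ha)⟩
  id_comp f := Subtype.ext (Category.id_comp _)
  comp_id f := Subtype.ext (Category.comp_id _)
  assoc f g h := Subtype.ext (Category.assoc _ _ _)

/-- A marked bisimplicial set: a bisimplicial set together with a set of marked edges in
`X_{1,0}` containing all degenerate edges. -/
structure MBSSet : Type 1 where
  carrier : BSSet
  marked : Set (carrier.obj (op ⦋1⦌, op ⦋0⦌))
  degen_marked : ∀ x : carrier.obj (op ⦋0⦌, op ⦋0⦌), hdegen x ∈ marked

instance : Category MBSSet where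
  Hom X Y := { g : X.carrier ⟶ Y.carrier //
    ∀ a ∈ X.marked, g.app (op ⦋1⦌, op ⦋0⦌) a ∈ Y.marked }
  id X := ⟨𝟙 X.carrier, fun _ ha => ha⟩
  comp f g := ⟨f.1 ≫ g.1, fun a ha => g.2 _ (f.2 a ha)⟩
  id_comp f := Subtype.ext (Category.id_comp _)
  comp_id f := Subtype.ext (Category.comp_id _)
  assoc f g h := Subtype.ext (Category.assoc _ _ _)

/-- The marked box product `A □ B` of a marked simplicial set and a simplicial set:
an edge `(a, b) ∈ A₁ × B₀` is marked iff `a` is marked. -/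
def mBoxObj (A : MSSet) (B : SSet.{0}) : MBSSet where
  carrier := boxObj A.carrier B
  marked := { z | z.1 ∈ A.marked }
  degen_marked x := A.degen_marked x.1

/-- The marked division `A \ X`: its `n`-simplices are the marked maps `A □ Δⁿ ⟶ X`. -/
def mUnder (A : MSSet) (X : MBSSet) : SSet.{0} where
  obj n := { σ : boxObj A.carrier (SSet.stdSimplex.obj n.unop) ⟶ X.carrier //
      ∀ a ∈ A.marked, ∀ b, σ.app (op ⦋1⦌, op ⦋0⦌) (a, b) ∈ X.marked }
  map {n m} φ := TypeCat.ofHom fun σ =>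
    ⟨boxMap (𝟙 A.carrier) (SSet.stdSimplex.map φ.unop) ≫ σ.1,
      fun a ha b => σ.2 a ha _⟩
  map_id n := by
    apply ConcreteCategory.hom_ext
    intro σ
    apply Subtype.ext
    show boxMap (𝟙 A.carrier) (SSet.stdSimplex.map (𝟙 n.unop)) ≫ σ.1 = σ.1
    rw [CategoryTheory.Functor.map_id (self := SSet.stdSimplex), boxMap_id, Category.id_comp]
  map_comp {n m k} φ ψ := by
    apply ConcreteCategory.hom_ext
    intro σ
    apply Subtype.ext
    show boxMap (𝟙 A.carrier) (SSet.stdSimplex.map (ψ.unop ≫ φ.unop)) ≫ σ.1 = _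
    rw [Functor.map_comp (self := SSet.stdSimplex), boxMapR_comp, Category.assoc]
    rfl

/-- Restriction of marked divisions along a map of marked simplicial sets. -/
def mUnderWhisker {A A' : MSSet} (u : A ⟶ A') (X : MBSSet) :
    mUnder A' X ⟶ mUnder A X where
  app n := TypeCat.ofHom fun σ => ⟨boxMap u.1 (𝟙 _) ≫ σ.1, fun a ha b => σ.2 _ (u.2 a ha) b⟩
  naturality n m φ := rfl

/-- Pushforward of marked divisions along a map of marked bisimplicial sets. -/
def mUnderPush (A : MSSet) {X Y : MBSSet} (f : X ⟶ Y) :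
    mUnder A X ⟶ mUnder A Y where
  app n := TypeCat.ofHom fun σ => ⟨σ.1 ≫ f.1, fun a ha b => f.2 _ (σ.2 a ha b)⟩
  naturality n m φ := rfl

lemma mUnderSq {A A' : MSSet} (u : A ⟶ A') {X Y : MBSSet} (f : X ⟶ Y) :
    mUnderWhisker u X ≫ mUnderPush A f = mUnderPush A' f ≫ mUnderWhisker u Y := rfl

/-- The gap map `⟨u \ f⟩` for marked divisions. -/
noncomputable def mUnderGap {A A' : MSSet} (u : A ⟶ A') {X Y : MBSSet} (f : X ⟶ Y) :
    mUnder A' X ⟶ pullback (mUnderPush A f) (mUnderWhisker u Y) :=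
  pullback.lift (mUnderWhisker u X) (mUnderPush A' f) (mUnderSq u f)

/-- The marked slice `X / B`: underlying simplicial set `X̊ / B`, an edge being marked iff
it sends each pair `(id₁, b)` to a marked edge of `X`. -/
def mOver (X : MBSSet) (B : SSet.{0}) : MSSet where
  carrier := over' X.carrier B
  marked := setOf fun σ : (over' X.carrier B).obj (op ⦋1⦌) =>
      ∀ b : B.obj (op ⦋0⦌), NatTrans.app σ (op ⦋1⦌, op ⦋0⦌) (idSimplex ⦋1⦌, b) ∈ X.marked
  degen_marked x := by
    intro b
    have h := types_congr_hom
      (x.naturality ((((SimplexCategory.σ 0).op : sc 0 ⟶ sc 1), 𝟙 (sc 0)) :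
        (sc 0, sc 0) ⟶ (sc 1, sc 0))) (idSimplex ⦋0⦌, b)
    simp only [types_comp_apply, boxObj_map, FunctorToTypes.map_id_apply] at h
    exact Set.mem_of_eq_of_mem h (X.degen_marked _)

/-- Pushforward of marked slices. -/
def mOverPush (B : SSet.{0}) {X Y : MBSSet} (f : X ⟶ Y) :
    mOver X B ⟶ mOver Y B :=
  ⟨overPush B f.1, by
    intro σ hσ b
    exact f.2 _ (hσ b)⟩

/-- The functor `A □ - : SSet ⥤ MBSSet` for a marked simplicial set `A`. -/
def mBoxLFunctor (A : MSSet) : SSet.{0} ⥤ MBSSet where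
  obj B := mBoxObj A B
  map v := ⟨boxMap (𝟙 A.carrier) v, fun z hz => hz⟩
  map_id B := Subtype.ext rfl
  map_comp v w := Subtype.ext rfl

/-- The functor `A \ - : MBSSet ⥤ SSet` for a marked simplicial set `A`. -/
def mUnderFunctor (A : MSSet) : MBSSet ⥤ SSet.{0} where
  obj X := mUnder A X
  map f := mUnderPush A f
  map_id X := by
    apply NatTrans.ext
    funext n
    apply ConcreteCategory.hom_ext
    intro σ
    exact Subtype.ext (Category.comp_id _)
  map_comp f g := rfl

/-- The functor `- □ B : MSSet ⥤ MBSSet` for a simplicial set `B`. -/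
def mBoxRFunctor (B : SSet.{0}) : MSSet ⥤ MBSSet where
  obj A := mBoxObj A B
  map u := ⟨boxMap u.1 (𝟙 B), fun z hz => u.2 z.1 hz⟩
  map_id A := Subtype.ext rfl
  map_comp u v := Subtype.ext rfl

/-- The functor `- / B : MBSSet ⥤ MSSet` for a simplicial set `B`. -/
def mOverFunctor (B : SSet.{0}) : MBSSet ⥤ MSSet where
  obj X := mOver X B
  map f := mOverPush B f
  map_id X := by
    apply Subtype.ext
    apply NatTrans.ext
    funext n
    apply ConcreteCategory.hom_ext
    intro σ
    exact Category.comp_id σ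
  map_comp f g := rfl

/-- The vertex `v` of a simplex. -/
def vertexOf {S : SSet.{0}} {n : SimplexCategoryᵒᵖ} (σ : S.obj n)
    (v : Fin (n.unop.len + 1)) : S.obj (op ⦋0⦌) :=
  S.map (Quiver.Hom.op
    (SimplexCategory.Hom.mk (OrderHom.const _ v) : (⦋0⦌ : SimplexCategory) ⟶ n.unop)) σ

/-- A full inclusion of simplicial sets: a levelwise injection such that any simplex all of
whose vertices lie in the image itself lies in the image. -/
def IsFullInclusion {S T : SSet.{0}} (j : S ⟶ T) : Prop :=
  (∀ n, Function.Injective (j.app n)) ∧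
  ∀ (n : SimplexCategoryᵒᵖ) (σ : T.obj n),
    (∀ v : Fin (n.unop.len + 1), vertexOf σ v ∈ Set.range (j.app (op ⦋0⦌))) →
    σ ∈ Set.range (j.app n)

/-- The inclusion `A \ X ⟶ Å \ X̊` of the marked division into the unmarked one. -/
def mUnderIncl (A : MSSet) (X : MBSSet) : mUnder A X ⟶ under A.carrier X.carrier where
  app n := TypeCat.ofHom fun σ => σ.1
  naturality n m φ := rfl

/-- A marking on a marked bisimplicial set respects path components if for every edge
`e → e'` in the space `X₁`, `e` is marked iff `e'` is marked. -/
def MarkingRespectsPathComponents (X : MBSSet) : Prop :=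
  ∀ h : X.carrier.obj (op ⦋1⦌, op ⦋1⦌), (vface 1 h ∈ X.marked ↔ vface 0 h ∈ X.marked)

/-- The `ℒ`-marking on a simplicial set `B` equipped with an edge `ι : Δ¹ ⟶ B`: the only
marked edges are the degenerate ones and (the image of) `ι`. -/
def mkL (B : SSet.{0}) (ι : Δ[1] ⟶ B) : MSSet where
  carrier := B
  marked := Set.range (B.map ((SimplexCategory.σ 0).op : sc 0 ⟶ sc 1)) ∪
    {ι.app (op ⦋1⦌) (idSimplex ⦋1⦌)}
  degen_marked x := Or.inl ⟨x, rfl⟩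

/-- A map between `ℒ`-marked simplicial sets preserving the distinguished edges. -/
def mkLHom {A B : SSet.{0}} (i : A ⟶ B) (ιA : Δ[1] ⟶ A) (ιB : Δ[1] ⟶ B)
    (h : ιA ≫ i = ιB) : mkL A ιA ⟶ mkL B ιB :=
  ⟨i, by
    rintro a (⟨x, rfl⟩ | ha)
    · exact Or.inl ⟨i.app _ x, (types_congr_hom (i.naturality _) x).symm⟩
    · right
      obtain rfl := Set.mem_singleton_iff.mp ha
      subst h
      exact rfl⟩

lemma eConst_app {X : BSSet} (m : SimplexCategory) (e : X.obj (op ⦋1⦌, op ⦋0⦌))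
    (b : (SSet.stdSimplex.{0}.obj m).obj (sc 0)) :
    (eConst m e).app (op ⦋1⦌, op ⦋0⦌) (idSimplex ⦋1⦌, b) = e := by
  show X.map ((SSet.stdSimplex.objEquiv (n := (⦋1⦌ : SimplexCategory)) (m := sc 1)
      (idSimplex ⦋1⦌)).op,
    (SSet.stdSimplex.objEquiv (n := (⦋0⦌ : SimplexCategory)) (m := sc 0)
      ((SSet.stdSimplex.map (toZero m)).app (sc 0) b)).op) e = e
  rw [show SSet.stdSimplex.objEquiv (n := (⦋1⦌ : SimplexCategory)) (m := sc 1) (idSimplex ⦋1⦌)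
      = 𝟙 (⦋1⦌ : SimplexCategory) from Equiv.apply_symm_apply _ _,
    toZero_unique (SSet.stdSimplex.objEquiv (n := (⦋0⦌ : SimplexCategory)) (m := sc 0)
      ((SSet.stdSimplex.map (toZero m)).app (sc 0) b)) (𝟙 (⦋0⦌ : SimplexCategory))]
  exact FunctorToTypes.map_id_apply X e

/-- The map from a fibered diagram space to the `ℒ`-marked division, well-defined when the
fixed edge `e` is marked. -/
def fibToMarked {B : SSet.{0}} (ι : Δ[1] ⟶ B) (X : MBSSet)
    (e : X.carrier.obj (op ⦋1⦌, op ⦋0⦌)) (he : e ∈ X.marked) :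
    fib ι X.carrier e ⟶ mUnder (mkL B ι) X where
  app n := TypeCat.ofHom fun σ => ⟨σ.1, by
    rintro a (⟨x, rfl⟩ | ha) b
    · have h := types_congr_hom
        (σ.1.naturality ((((SimplexCategory.σ 0).op : sc 0 ⟶ sc 1), 𝟙 (sc 0)) :
          (sc 0, sc 0) ⟶ (sc 1, sc 0))) (x, b)
      simp only [types_comp_apply, boxObj_map, FunctorToTypes.map_id_apply] at h
      exact Set.mem_of_eq_of_mem h (X.degen_marked _)
    · obtain rfl := Set.mem_singleton_iff.mp ha
      have h := types_congr_hom (congrArg (fun τ => NatTrans.app τ (sc 1, sc 0)) σ.2)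
        (idSimplex ⦋1⦌, b)
      exact Set.mem_of_eq_of_mem (h.trans (eConst_app _ e b)) he⟩
  naturality n m φ := rfl

section Saturation

universe v u
variable {C : Type u} [Category.{v} C]

/-- `f` is a retract of `g` in the arrow category. -/
def IsRetractOfArrow {X Y A B : C} (f : X ⟶ Y) (g : A ⟶ B) : Prop :=
  ∃ (iX : X ⟶ A) (rX : A ⟶ X) (iY : Y ⟶ B) (rY : B ⟶ Y),
    iX ≫ rX = 𝟙 X ∧ iY ≫ rY = 𝟙 Y ∧ iX ≫ g = f ≫ iY ∧ g ≫ rY = rX ≫ f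

/-- Stability of a class of morphisms under retracts. -/
def StableUnderRetracts (T : MorphismProperty C) : Prop :=
  ∀ ⦃X Y A B : C⦄ (f : X ⟶ Y) (g : A ⟶ B), IsRetractOfArrow f g → T g → T f

/-- Stability of a class of morphisms under pushouts (cobase change). -/
def StableUnderPushouts (T : MorphismProperty C) : Prop :=
  ∀ ⦃X Y X' Y' : C⦄ (s : X ⟶ X') (f : X ⟶ Y) (f' : X' ⟶ Y') (t : Y ⟶ Y'),
    IsPushout s f f' t → T f → T f'

/-- The inclusion functor of an initial segment of a preorder. -/
def iioIncl {J : Type} [Preorder J] (j : J) : Set.Iio j ⥤ J :=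
  Monotone.functor (f := fun i => (i : J)) (fun _ _ h => h)

/-- The canonical cocone on `F.obj j` over the restriction of a chain `F` to `Set.Iio j`. -/
def chainCocone {J : Type} [Preorder J] (F : J ⥤ C) (j : J) :
    Limits.Cocone (iioIncl j ⋙ F) where
  pt := F.obj j
  ι :=
    { app := fun i => F.map (homOfLE (le_of_lt i.2))
      naturality := by
        intro i i' g
        dsimp [iioIncl, Monotone.functor]
        rw [Category.comp_id, ← F.map_comp]
        congr 1 }

/-- Stability of a class of morphisms under transfinite composition: for every continuous
chain indexed by a well-ordered set all of whose successor maps lie in `T`, the composite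
map from the bottom object to the colimit lies in `T`. -/
def StableUnderTransfiniteCompositions (T : MorphismProperty C) : Prop :=
  ∀ (J : Type) [LinearOrder J] [OrderBot J] [SuccOrder J] [WellFoundedLT J]
    (F : J ⥤ C) (c : Limits.Cocone F), Limits.IsColimit c →
    (∀ j : J, ¬IsMax j → T (F.map (homOfLE (Order.le_succ j)))) →
    (∀ j : J, Order.IsSuccLimit j → Nonempty (Limits.IsColimit (chainCocone F j))) →
    T (c.ι.app ⊥)

/-- A saturated class of morphisms: one stable under pushouts, retracts and transfinite
composition. -/
def IsSaturatedClass (T : MorphismProperty C) : Prop :=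
  StableUnderPushouts T ∧ StableUnderRetracts T ∧ StableUnderTransfiniteCompositions T

/-- `f` lies in the saturated hull of the class `S`: it belongs to every saturated class
containing `S`. -/
def InSaturatedHull (S : MorphismProperty C) {X Y : C} (f : X ⟶ Y) : Prop :=
  ∀ T : MorphismProperty C, IsSaturatedClass T → S ≤ T → T f

end Saturation

/-- The class of inner horn inclusions `Λ[n, i] ⟶ Δ[n]`, `0 < i < n` (closed under
isomorphism of arrows). -/
def innerHornClass : MorphismProperty SSet.{0} := fun _ _ f =>
  ∃ (n : ℕ) (i : Fin (n + 1)), 0 < (i : ℕ) ∧ (i : ℕ) < n ∧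
    Nonempty (Arrow.mk f ≅ Arrow.mk (Λ[n, i].ι))

/-- A map of simplicial sets is inner anodyne if it lies in the saturated hull of the inner
horn inclusions. -/
def IsInnerAnodyne {A B : SSet.{0}} (v : A ⟶ B) : Prop :=
  InSaturatedHull innerHornClass v

/-- The flat marking: only degenerate edges are marked. -/
def flatM (A : SSet.{0}) : MSSet :=
  ⟨A, Set.range (A.map ((SimplexCategory.σ 0).op : sc 0 ⟶ sc 1)), fun x => ⟨x, rfl⟩⟩

/-- A map of simplicial sets as a map of flat-marked simplicial sets. -/
def flatHom {A B : SSet.{0}} (v : A ⟶ B) : flatM A ⟶ flatM B :=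
  ⟨v, by
    rintro a ⟨x, rfl⟩
    exact ⟨v.app _ x, (types_congr_hom (v.naturality _) x).symm⟩⟩

/-! ### Auxiliary material for Statement 13 -/

section GenericSaturation

universe v u
variable {C : Type u} [Category.{v} C] {T : MorphismProperty C}

lemma id_mem_of_saturated (hsat : IsSaturatedClass T) (X : C) : T (𝟙 X) := by
  let F : Fin 1 ⥤ C := (Functor.const _).obj X
  let c : Limits.Cocone F :=
    { pt := X
      ι := { app := fun _ => 𝟙 X, naturality := by intros; simp [F] } }
  have hc : Limits.IsColimit c :=
    { desc := fun s => s.ι.app 0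
      fac := fun s j => by
        have hj : j = 0 := Subsingleton.elim _ _
        subst hj
        show 𝟙 X ≫ s.ι.app 0 = s.ι.app 0
        rw [Category.id_comp]
      uniq := fun s m hm => by
        have h0 := hm 0
        show m = s.ι.app 0
        rw [← h0]
        exact (Category.id_comp m).symm }
  haveI : WellFoundedLT (Fin 1) := inferInstance
  exact hsat.2.2 (Fin 1) F c hc
    (fun j hj => absurd (fun b _ => le_of_eq (Subsingleton.elim b j)) hj)
    (fun j hlim => absurd (fun b _ => le_of_eq (Subsingleton.elim j b)) hlim.1)

lemma comp_mem_of_saturated (hsat : IsSaturatedClass T) {X Y Z : C} (f : X ⟶ Y) (g : Y ⟶ Z)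
    (hf : T f) (hg : T g) : T (f ≫ g) := by
  let F : Fin 3 ⥤ C := ComposableArrows.mk₂ f g
  have hmap01 : ∀ (a b : Fin 3) (h : a ⟶ b), a = 0 → b = 1 → T (F.map h) := by
    intro a b h ha hb
    subst ha; subst hb
    rw [Subsingleton.elim h (homOfLE (by decide))]
    exact hf
  have hmap12 : ∀ (a b : Fin 3) (h : a ⟶ b), a = 1 → b = 2 → T (F.map h) := by
    intro a b h ha hb
    subst ha; subst hb
    rw [Subsingleton.elim h (homOfLE (by decide))]
    exact hg
  let c : Limits.Cocone F :=
    { pt := F.obj (Fin.last 2)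
      ι := { app := fun j => F.map (homOfLE (Fin.le_last j))
             naturality := fun j k u => by
               dsimp
               rw [Category.comp_id, ← F.map_comp]
               exact congrArg F.map (Subsingleton.elim _ _) } }
  have hc : Limits.IsColimit c :=
    { desc := fun s => s.ι.app (Fin.last 2)
      fac := fun s j => s.w (homOfLE (Fin.le_last j))
      uniq := fun s m hm => by
        have h2 := hm (Fin.last 2)
        show m = s.ι.app (Fin.last 2)
        rw [← h2, show c.ι.app (Fin.last 2) = F.map (𝟙 _) from rfl, F.map_id,
          Category.id_comp] }
  have hsucc : ∀ j : Fin 3, ¬IsMax j → T (F.map (homOfLE (Order.le_succ j))) := by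
    intro j hj
    fin_cases j
    · exact hmap01 _ _ _ (by decide) (by simp [Order.succ] <;> decide)
    · exact hmap12 _ _ _ (by decide) (by simp [Order.succ] <;> decide)
    · exact absurd (fun b _ => Fin.le_last b) hj
  have hlim : ∀ j : Fin 3, Order.IsSuccLimit j →
      Nonempty (Limits.IsColimit (chainCocone F j)) := by
    intro j hl
    exfalso
    fin_cases j
    · exact hl.1 (fun b _ => Fin.zero_le b)
    · exact hl.2 0 ⟨by decide, fun c h1 h2 => by revert c; decide⟩
    · exact hl.2 1 ⟨by decide, fun c h1 h2 => by revert c; decide⟩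
  haveI : WellFoundedLT (Fin 3) := inferInstance
  have h := hsat.2.2 (Fin 3) F c hc hsucc hlim
  have e : c.ι.app ⊥ = f ≫ g := by
    show F.map (homOfLE (Fin.le_last (⊥ : Fin 3))) = f ≫ g
    rw [Subsingleton.elim (homOfLE (Fin.le_last (⊥ : Fin 3)))
      (homOfLE (show (0 : Fin 3) ≤ 1 by decide) ≫ homOfLE (show (1 : Fin 3) ≤ 2 by decide)),
      F.map_comp]
    rfl
  rwa [e] at h

lemma iso_hom_mem_of_saturated (hsat : IsSaturatedClass T) {X Y : C} (e : X ≅ Y) :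
    T e.hom := by
  refine hsat.2.1 e.hom (𝟙 X) ⟨𝟙 X, 𝟙 X, e.inv, e.hom, by simp, by simp, by simp, by simp⟩ ?_
  exact id_mem_of_saturated hsat X

lemma mem_of_arrow_iso (hsat : IsSaturatedClass T) {A B X Y : C} (f : A ⟶ B) (g : X ⟶ Y)
    (eA : A ≅ X) (eB : B ≅ Y) (sq : eA.hom ≫ g = f ≫ eB.hom) (hg : T g) : T f := by
  refine hsat.2.1 f g ⟨eA.hom, eA.inv, eB.hom, eB.inv, by simp, by simp, sq, ?_⟩ hg
  rw [Iso.comp_inv_eq, Category.assoc, ← sq, Iso.inv_hom_id_assoc]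

end GenericSaturation

namespace Thirteen

open SSet

/-! #### Subcomplexes of the standard simplex determined by families of finsets -/

/-- A simplex of `Δ[n]` has all its vertices in some member of the family `F`. -/
def cond {n : ℕ} (F : Set (Finset (Fin (n+1)))) {m : SimplexCategoryᵒᵖ} (a : Δ[n].obj m) :
    Prop :=
  ∃ M ∈ F, ∀ j, SSet.stdSimplex.asOrderHom a j ∈ M

lemma cond_mono {n : ℕ} {F G : Set (Finset (Fin (n+1)))} (hFG : F ⊆ G) {m}
    {a : Δ[n].obj m} (h : cond F a) : cond G a := by
  obtain ⟨M, hM, h⟩ := h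
  exact ⟨M, hFG hM, h⟩

lemma cond_map {n : ℕ} (F : Set (Finset (Fin (n+1)))) {m m' : SimplexCategoryᵒᵖ}
    (φ : m ⟶ m') {a : Δ[n].obj m} (h : cond F a) : cond F (Δ[n].map φ a) := by
  obtain ⟨M, hM, h⟩ := h
  exact ⟨M, hM, fun j => h _⟩

/-- The subcomplex of `Δ[n]` spanned by the members of `F`. -/
def fam (n : ℕ) (F : Set (Finset (Fin (n+1)))) : SSet.{0} where
  obj m := { a : Δ[n].obj m // cond F a }
  map φ := TypeCat.ofHom fun a => ⟨Δ[n].map φ a.1, cond_map F φ a.2⟩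
  map_id m := by
    apply ConcreteCategory.hom_ext; intro a; apply Subtype.ext
    show Δ[n].map (𝟙 m) a.1 = a.1
    simp
  map_comp φ ψ := by
    apply ConcreteCategory.hom_ext; intro a; apply Subtype.ext
    show Δ[n].map (φ ≫ ψ) a.1 = Δ[n].map ψ (Δ[n].map φ a.1)
    simp

def famIncl {n : ℕ} {F G : Set (Finset (Fin (n+1)))} (hFG : F ⊆ G) :
    fam n F ⟶ fam n G where
  app m := TypeCat.ofHom fun a => ⟨a.1, cond_mono hFG a.2⟩
  naturality m m' φ := rfl

/-- The family `F` contains a member containing the vertices `0` and `1`. -/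
def edgeCond {n : ℕ} (F : Set (Finset (Fin (n+1)))) : Prop :=
  ∃ M ∈ F, ∀ x : Fin (n+1), x.val ≤ 1 → x ∈ M

lemma edgeCond_mono {n : ℕ} {F G : Set (Finset (Fin (n+1)))} (hFG : F ⊆ G)
    (h : edgeCond F) : edgeCond G := by
  obtain ⟨M, hM, h⟩ := h
  exact ⟨M, hFG hM, h⟩

lemma cond_of_le_one {n : ℕ} {F : Set (Finset (Fin (n+1)))} (h01 : edgeCond F) {m}
    (a : Δ[n].obj m) (hle : ∀ j, (SSet.stdSimplex.asOrderHom a j).val ≤ 1) : cond F a := by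
  obtain ⟨M, hM, h⟩ := h01
  exact ⟨M, hM, fun j => h _ (hle j)⟩

def famEdge {n : ℕ} (F : Set (Finset (Fin (n+1)))) (h01 : edgeCond F) (hn : 1 ≤ n) :
    Δ[1] ⟶ fam n F where
  app m := TypeCat.ofHom fun a => ⟨(edge01 n hn).app m a,
    cond_of_le_one h01 _ (fun j => Nat.lt_succ_iff.mp (SSet.stdSimplex.asOrderHom a j).isLt)⟩
  naturality m m' φ := by
    apply ConcreteCategory.hom_ext; intro a; exact Subtype.ext (types_congr_hom ((edge01 n hn).naturality φ) a)

/-- The `ℒ`-marked subcomplex. -/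
def mfam {n : ℕ} (F : Set (Finset (Fin (n+1)))) (h01 : edgeCond F) (hn : 1 ≤ n) : MSSet :=
  mkL (fam n F) (famEdge F h01 hn)

def mfamIncl {n : ℕ} {F G : Set (Finset (Fin (n+1)))} (hFG : F ⊆ G) (h01F : edgeCond F)
    (h01G : edgeCond G) (hn : 1 ≤ n) : mfam F h01F hn ⟶ mfam G h01G hn :=
  mkLHom (famIncl hFG) (famEdge F h01F hn) (famEdge G h01G hn) (by
    apply NatTrans.ext
    funext m; apply ConcreteCategory.hom_ext; intro a
    exact Subtype.ext rfl)

lemma msetHom_ext {X Y : MSSet} (f g : X ⟶ Y)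
    (h : ∀ m (a : X.carrier.obj m), f.1.app m a = g.1.app m a) : f = g := by
  apply Subtype.ext
  apply NatTrans.ext
  funext m; apply ConcreteCategory.hom_ext; intro a
  exact h m a

lemma mfamIncl_id {n : ℕ} {F : Set (Finset (Fin (n+1)))} (h01 : edgeCond F) (hn : 1 ≤ n) :
    mfamIncl (subset_refl F) h01 h01 hn = 𝟙 (mfam F h01 hn) :=
  msetHom_ext _ _ (fun m a => rfl)

lemma mfamIncl_comp {n : ℕ} {F G H : Set (Finset (Fin (n+1)))} (hFG : F ⊆ G) (hGH : G ⊆ H)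
    (h01F : edgeCond F) (h01G : edgeCond G) (h01H : edgeCond H) (hn : 1 ≤ n) :
    mfamIncl hFG h01F h01G hn ≫ mfamIncl hGH h01G h01H hn
      = mfamIncl (hFG.trans hGH) h01F h01H hn :=
  msetHom_ext _ _ (fun m a => rfl)

/-! #### Attaching a cell -/

section Cell

variable {n : ℕ} (F : Set (Finset (Fin (n+1)))) (St : Finset (Fin (n+1)))
  {d : ℕ} (hcard : St.card = d + 1)

/-- The injective monotone map `[d] ⟶ [n]` enumerating `St`. -/
def cellHom : (⦋d⦌ : SimplexCategory) ⟶ ⦋n⦌ :=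
  SimplexCategory.Hom.mk ⟨fun i => St.orderEmbOfFin hcard i, (St.orderEmbOfFin hcard).monotone⟩

def pushCell : (Δ[d] : SSet.{0}) ⟶ Δ[n] := SSet.stdSimplex.map (cellHom St hcard)

lemma asOrderHom_pushCell {m} (b : Δ[d].obj m) (j) :
    SSet.stdSimplex.asOrderHom ((pushCell St hcard).app m b) j
      = St.orderEmbOfFin hcard (SSet.stdSimplex.asOrderHom b j) := rfl

def attachC (k : Fin (d + 1))
    (cert1 : ∀ x ∈ St, x ≠ St.orderEmbOfFin hcard k → ∃ M ∈ F, St.erase x ⊆ M) :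
    (Λ[d, k] : SSet.{0}) ⟶ fam n F where
  app m := TypeCat.ofHom fun a => ⟨(pushCell St hcard).app m a.1, by
    obtain ⟨i, hi⟩ := (Set.ne_univ_iff_exists_notMem _).mp a.2
    have hik : St.orderEmbOfFin hcard i ≠ St.orderEmbOfFin hcard k := by
      intro h
      exact hi (Set.mem_union_right _ (by
        rw [Set.mem_singleton_iff]
        exact (St.orderEmbOfFin hcard).injective h))
    obtain ⟨M, hM, hsub⟩ := cert1 (St.orderEmbOfFin hcard i)
      (Finset.orderEmbOfFin_mem _ _ _) hik
    refine ⟨M, hM, fun j => hsub ?_⟩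
    show St.orderEmbOfFin hcard (SSet.stdSimplex.asOrderHom a.1 j)
      ∈ St.erase (St.orderEmbOfFin hcard i)
    refine Finset.mem_erase.2 ⟨?_, Finset.orderEmbOfFin_mem St hcard _⟩
    intro h
    exact hi (Set.mem_union_left _ ⟨j, (St.orderEmbOfFin hcard).injective h⟩)⟩
  naturality m m' φ := by
    apply ConcreteCategory.hom_ext; intro a
    exact Subtype.ext (types_congr_hom ((pushCell St hcard).naturality φ) a.1)

def topC : (Δ[d] : SSet.{0}) ⟶ fam n (insert St F) where
  app m := TypeCat.ofHom fun b => ⟨(pushCell St hcard).app m b,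
    ⟨St, Set.mem_insert _ _, fun j => by
      show St.orderEmbOfFin hcard (SSet.stdSimplex.asOrderHom b j) ∈ St
      exact Finset.orderEmbOfFin_mem St hcard _⟩⟩
  naturality m m' φ := by
    apply ConcreteCategory.hom_ext; intro b
    exact Subtype.ext (types_congr_hom ((pushCell St hcard).naturality φ) b)

lemma cell_square (k : Fin (d + 1))
    (cert1 : ∀ x ∈ St, x ≠ St.orderEmbOfFin hcard k → ∃ M ∈ F, St.erase x ⊆ M) :
    attachC F St hcard k cert1 ≫ famIncl (Set.subset_insert St F)
      = Λ[d, k].ι ≫ topC F St hcard := by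
  apply NatTrans.ext
  funext m; apply ConcreteCategory.hom_ext; intro a
  apply Subtype.ext
  rfl

lemma horn_of_cond (k : Fin (d + 1))
    (cert3 : ¬ ∃ M ∈ F, St.erase (St.orderEmbOfFin hcard k) ⊆ M)
    {m} (b : Δ[d].obj m) (hb : cond F ((pushCell St hcard).app m b)) :
    Set.range ⇑(SSet.stdSimplex.asOrderHom b) ∪ {k} ≠ Set.univ := by
  intro huniv
  apply cert3
  obtain ⟨M, hM, hmem⟩ := hb
  refine ⟨M, hM, fun x hx => ?_⟩
  obtain ⟨hxp, hxS⟩ := Finset.mem_erase.1 hx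
  have hrange : x ∈ Set.range ⇑(St.orderEmbOfFin hcard) := by
    rw [Finset.range_orderEmbOfFin]
    exact hxS
  obtain ⟨i, rfl⟩ := hrange
  have hik : i ∈ Set.range ⇑(SSet.stdSimplex.asOrderHom b) ∪ {k} := huniv ▸ Set.mem_univ i
  rcases hik with ⟨j, rfl⟩ | h
  · exact hmem j
  · exact absurd (congrArg (St.orderEmbOfFin hcard) (Set.mem_singleton_iff.1 h)) hxp

lemma mem_St_of_not_cond {m} {a : Δ[n].obj m} (ha : cond (insert St F) a)
    (h' : ¬ cond F a) : ∀ j, SSet.stdSimplex.asOrderHom a j ∈ St := by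
  obtain ⟨M, hM, hmem⟩ := ha
  rcases Set.mem_insert_iff.1 hM with rfl | hMF
  · exact hmem
  · exact absurd ⟨M, hMF, hmem⟩ h'

def pullO {m} (a : Δ[n].obj m) (hSt : ∀ j, SSet.stdSimplex.asOrderHom a j ∈ St) : (Δ[d] : SSet.{0}).obj m :=
  ULift.up (SimplexCategory.Hom.mk
    ⟨fun j => (St.orderIsoOfFin hcard).symm ⟨SSet.stdSimplex.asOrderHom a j, hSt j⟩,
     fun i j hij =>
       (St.orderIsoOfFin hcard).symm.monotone
         (Subtype.mk_le_mk.2 ((SSet.stdSimplex.asOrderHom a).monotone hij))⟩)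

lemma emb_symm_apply (x : {y // y ∈ St}) :
    St.orderEmbOfFin hcard ((St.orderIsoOfFin hcard).symm x) = ↑x := by
  rw [← Finset.coe_orderIsoOfFin_apply, OrderIso.apply_symm_apply]

lemma symm_emb_apply (i : Fin (d+1)) (h : St.orderEmbOfFin hcard i ∈ St) :
    (St.orderIsoOfFin hcard).symm ⟨St.orderEmbOfFin hcard i, h⟩ = i := by
  have e : (⟨St.orderEmbOfFin hcard i, h⟩ : {y // y ∈ St}) = St.orderIsoOfFin hcard i :=
    Subtype.ext (Finset.coe_orderIsoOfFin_apply St hcard i)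
  rw [e, OrderIso.symm_apply_apply]

lemma push_pull {m} (a : Δ[n].obj m) (hSt : ∀ j, SSet.stdSimplex.asOrderHom a j ∈ St) :
    (pushCell St hcard).app m (pullO St hcard a hSt) = a := by
  show ULift.up ((pullO St hcard a hSt).down ≫ cellHom St hcard) = a
  conv_rhs => rw [show a = ULift.up a.down from rfl]
  congr 1
  apply SimplexCategory.Hom.ext
  apply OrderHom.ext
  funext j
  exact emb_symm_apply St hcard _

lemma pull_push {m} (b : Δ[d].obj m)
    (hSt : ∀ j, SSet.stdSimplex.asOrderHom ((pushCell St hcard).app m b) j ∈ St) :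
    pullO St hcard ((pushCell St hcard).app m b) hSt = b := by
  show ULift.up _ = b
  conv_rhs => rw [show b = ULift.up b.down from rfl]
  congr 1
  apply SimplexCategory.Hom.ext
  apply OrderHom.ext
  funext j
  exact symm_emb_apply St hcard _ _

section Desc

variable (k : Fin (d + 1))
  (cert1 : ∀ x ∈ St, x ≠ St.orderEmbOfFin hcard k → ∃ M ∈ F, St.erase x ⊆ M)
  (cert3 : ¬ ∃ M ∈ F, St.erase (St.orderEmbOfFin hcard k) ⊆ M)
  {W : SSet.{0}} (inlC : fam n F ⟶ W) (inrC : (Δ[d] : SSet.{0}) ⟶ W)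
  (hcomm : attachC F St hcard k cert1 ≫ inlC = Λ[d, k].ι ≫ inrC)

include k cert1 cert3 hcomm

lemma descBridge {m} (b : Δ[d].obj m) (hb : cond F ((pushCell St hcard).app m b)) :
    inlC.app m ⟨(pushCell St hcard).app m b, hb⟩ = inrC.app m b := by
  have h := types_congr_hom (congrArg (fun (t : (Λ[d,k] : SSet.{0}) ⟶ W) => t.app m) hcomm)
    ⟨b, horn_of_cond F St hcard k cert3 b hb⟩
  exact h

open Classical in
noncomputable def descC : fam n (insert St F) ⟶ W where
  app m := TypeCat.ofHom fun a =>
    if h' : cond F a.1 then inlC.app m ⟨a.1, h'⟩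
    else inrC.app m (pullO St hcard a.1 (mem_St_of_not_cond F St a.2 h'))
  naturality := by
    intro m m' φ
    apply ConcreteCategory.hom_ext; intro a
    show (if h' : cond F (Δ[n].map φ a.1) then inlC.app m' ⟨Δ[n].map φ a.1, h'⟩
        else inrC.app m' (pullO St hcard (Δ[n].map φ a.1)
          (mem_St_of_not_cond F St (cond_map (insert St F) φ a.2) h')))
      = W.map φ (if h' : cond F a.1 then inlC.app m ⟨a.1, h'⟩
        else inrC.app m (pullO St hcard a.1 (mem_St_of_not_cond F St a.2 h')))
    by_cases h1 : cond F a.1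
    · have h2 : cond F (Δ[n].map φ a.1) := cond_map F φ h1
      rw [dif_pos h1, dif_pos h2]
      exact FunctorToTypes.naturality inlC φ ⟨a.1, h1⟩
    · by_cases h2 : cond F (Δ[n].map φ a.1)
      · rw [dif_neg h1, dif_pos h2]
        set b := pullO St hcard a.1 (mem_St_of_not_cond F St a.2 h1) with hbdef
        have hpb : (pushCell St hcard).app m' (Δ[d].map φ b) = Δ[n].map φ a.1 := by
          rw [FunctorToTypes.naturality (pushCell St hcard) φ b, hbdef,
            push_pull St hcard a.1 _]
        have hb2 : cond F ((pushCell St hcard).app m' (Δ[d].map φ b)) := by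
          rw [hpb]; exact h2
        calc inlC.app m' ⟨Δ[n].map φ a.1, h2⟩
            = inlC.app m' ⟨(pushCell St hcard).app m' (Δ[d].map φ b), hb2⟩ :=
              congrArg (inlC.app m') (Subtype.ext hpb.symm)
          _ = inrC.app m' (Δ[d].map φ b) :=
              descBridge F St hcard k cert1 cert3 inlC inrC hcomm _ hb2
          _ = W.map φ (inrC.app m b) := FunctorToTypes.naturality inrC φ b
      · rw [dif_neg h1, dif_neg h2]
        exact FunctorToTypes.naturality inrC φ
          (pullO St hcard a.1 (mem_St_of_not_cond F St a.2 h1))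

open Classical in
lemma desc_fac_inl :
    famIncl (Set.subset_insert St F) ≫ descC F St hcard k cert1 cert3 inlC inrC hcomm
      = inlC := by
  apply NatTrans.ext
  funext m; apply ConcreteCategory.hom_ext; intro a
  show (if h' : cond F a.1 then inlC.app m ⟨a.1, h'⟩
      else inrC.app m (pullO St hcard a.1
        (mem_St_of_not_cond F St (cond_mono (Set.subset_insert St F) a.2) h')))
    = inlC.app m a
  rw [dif_pos a.2]
  exact congrArg (inlC.app m) (Subtype.ext rfl)

open Classical in
lemma desc_fac_inr :
    topC F St hcard ≫ descC F St hcard k cert1 cert3 inlC inrC hcomm = inrC := by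
  apply NatTrans.ext
  funext m; apply ConcreteCategory.hom_ext; intro b
  show (if h' : cond F ((pushCell St hcard).app m b)
      then inlC.app m ⟨(pushCell St hcard).app m b, h'⟩
      else inrC.app m (pullO St hcard ((pushCell St hcard).app m b)
        (mem_St_of_not_cond F St ((topC F St hcard).app m b).2 h')))
    = inrC.app m b
  by_cases h' : cond F ((pushCell St hcard).app m b)
  · rw [dif_pos h']
    exact descBridge F St hcard k cert1 cert3 inlC inrC hcomm b h'
  · rw [dif_neg h']
    exact congrArg (inrC.app m) (pull_push St hcard b _)

open Classical in
lemma desc_uniq (mC : fam n (insert St F) ⟶ W)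
    (hl : famIncl (Set.subset_insert St F) ≫ mC = inlC)
    (hr : topC F St hcard ≫ mC = inrC) :
    mC = descC F St hcard k cert1 cert3 inlC inrC hcomm := by
  apply NatTrans.ext
  funext m; apply ConcreteCategory.hom_ext; intro a
  show mC.app m a = (if h' : cond F a.1 then inlC.app m ⟨a.1, h'⟩
    else inrC.app m (pullO St hcard a.1 (mem_St_of_not_cond F St a.2 h')))
  by_cases h' : cond F a.1
  · rw [dif_pos h']
    exact types_congr_hom (congrArg (fun t => NatTrans.app t m) hl) ⟨a.1, h'⟩
  · rw [dif_neg h']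
    have ha := mem_St_of_not_cond F St a.2 h'
    have e : a = (topC F St hcard).app m (pullO St hcard a.1 ha) :=
      Subtype.ext (push_pull St hcard a.1 ha).symm
    have h2 := types_congr_hom (congrArg (fun t => NatTrans.app t m) hr) (pullO St hcard a.1 ha)
    conv_lhs => rw [e]
    exact h2

end Desc

end Cell

/-! #### Marked cell attachments -/

section MarkedCell

variable {n : ℕ} (F : Set (Finset (Fin (n+1)))) (St : Finset (Fin (n+1)))
  {d : ℕ} (hcard : St.card = d + 1) (k : Fin (d + 1))
  (cert1 : ∀ x ∈ St, x ≠ St.orderEmbOfFin hcard k → ∃ M ∈ F, St.erase x ⊆ M)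
  (cert3 : ¬ ∃ M ∈ F, St.erase (St.orderEmbOfFin hcard k) ⊆ M)
  (h01F : edgeCond F) (hn1 : 1 ≤ n)

/-- The flat-marked attaching map. -/
def attachMFlat : flatM (Λ[d, k] : SSet.{0}) ⟶ mfam F h01F hn1 :=
  ⟨attachC F St hcard k cert1, by
    rintro a ⟨x, rfl⟩
    exact Or.inl ⟨(attachC F St hcard k cert1).app _ x,
      (types_congr_hom ((attachC F St hcard k cert1).naturality _) x).symm⟩⟩

/-- The flat-marked top cell map. -/
def topMFlat : flatM (Δ[d] : SSet.{0}) ⟶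
    mfam (insert St F) (edgeCond_mono (Set.subset_insert St F) h01F) hn1 :=
  ⟨topC F St hcard, by
    rintro a ⟨x, rfl⟩
    exact Or.inl ⟨(topC F St hcard).app _ x,
      (types_congr_hom ((topC F St hcard).naturality _) x).symm⟩⟩

open Classical in
lemma descC_app_of_cond {W : SSet.{0}} (inlC : fam n F ⟶ W) (inrC : (Δ[d] : SSet.{0}) ⟶ W)
    (hcomm : attachC F St hcard k cert1 ≫ inlC = Λ[d, k].ι ≫ inrC)
    {m} (a : (fam n (insert St F)).obj m) (h : cond F a.1) :
    (descC F St hcard k cert1 cert3 inlC inrC hcomm).app m a = inlC.app m ⟨a.1, h⟩ := by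
  show (if h' : cond F a.1 then inlC.app m ⟨a.1, h'⟩
    else inrC.app m (pullO St hcard a.1 (mem_St_of_not_cond F St a.2 h')))
    = inlC.app m ⟨a.1, h⟩
  rw [dif_pos h]

/-- The descent morphism of marked simplicial sets. -/
noncomputable def descM (W : MSSet) (inlM : mfam F h01F hn1 ⟶ W)
    (inrC : (Δ[d] : SSet.{0}) ⟶ W.carrier)
    (hcommC : attachC F St hcard k cert1 ≫ inlM.1 = Λ[d, k].ι ≫ inrC) :
    mfam (insert St F) (edgeCond_mono (Set.subset_insert St F) h01F) hn1 ⟶ W :=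
  ⟨descC F St hcard k cert1 cert3 inlM.1 inrC hcommC, by
    rintro a (⟨x, rfl⟩ | ha)
    · erw [FunctorToTypes.naturality
        (descC F St hcard k cert1 cert3 inlM.1 inrC hcommC)
        ((SimplexCategory.σ 0).op : sc 0 ⟶ sc 1) x]
      exact W.degen_marked _
    · replace ha := Set.mem_singleton_iff.mp ha
      subst ha
      have hcond : cond F ((edge01 n hn1).app (op ⦋1⦌) (idSimplex ⦋1⦌)) :=
        cond_of_le_one h01F _
          (fun j => Nat.lt_succ_iff.mp (SSet.stdSimplex.asOrderHom (idSimplex ⦋1⦌) j).isLt)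
      erw [descC_app_of_cond F St hcard k cert1 cert3 inlM.1 inrC hcommC
        ((famEdge (insert St F) (edgeCond_mono (Set.subset_insert St F) h01F) hn1).app (op ⦋1⦌) (idSimplex ⦋1⦌)) hcond]
      exact inlM.2 _ (Or.inr rfl)⟩

include hcard cert1 cert3 in
lemma T_step_flat (T : MorphismProperty MSSet) (hsat : IsSaturatedClass T)
    (hflat : ∀ ⦃A B : SSet.{0}⦄ (v : A ⟶ B), IsInnerAnodyne v → T (flatHom v))
    (hk0 : 0 < k.val) (hkd : k.val < d) :
    T (mfamIncl (Set.subset_insert St F) h01F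
        (edgeCond_mono (Set.subset_insert St F) h01F) hn1) := by
  have hinner : IsInnerAnodyne (Λ[d, k].ι) := by
    intro T' hT' hle
    exact hle _ ⟨d, k, hk0, hkd, ⟨Iso.refl _⟩⟩
  have sq : attachMFlat F St hcard k cert1 h01F hn1 ≫
        mfamIncl (Set.subset_insert St F) h01F
          (edgeCond_mono (Set.subset_insert St F) h01F) hn1
      = flatHom (Λ[d, k].ι) ≫ topMFlat F St hcard h01F hn1 := by
    apply msetHom_ext
    intro m a
    apply Subtype.ext
    rfl
  have hco := Limits.PushoutCocone.IsColimit.mk sq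
    (fun s' => descM F St hcard k cert1 cert3 h01F hn1 s'.pt s'.inl s'.inr.1
        (congrArg Subtype.val s'.condition))
    (fun s' => msetHom_ext _ _ (fun m a =>
      types_congr_hom (congrArg (fun t => NatTrans.app t m)
        (desc_fac_inl F St hcard k cert1 cert3 s'.inl.1 s'.inr.1
          (congrArg Subtype.val s'.condition))) a))
    (fun s' => msetHom_ext _ _ (fun m a =>
      types_congr_hom (congrArg (fun t => NatTrans.app t m)
        (desc_fac_inr F St hcard k cert1 cert3 s'.inl.1 s'.inr.1
          (congrArg Subtype.val s'.condition))) a))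
    (fun s' mC h1 h2 => msetHom_ext _ _ (fun m a =>
      types_congr_hom (congrArg (fun t => NatTrans.app t m)
        (desc_uniq F St hcard k cert1 cert3 s'.inl.1 s'.inr.1
          (congrArg Subtype.val s'.condition) mC.1
          (congrArg Subtype.val h1) (congrArg Subtype.val h2))) a))
  exact hsat.1 _ _ _ _ (IsPushout.of_isColimit hco) (hflat _ hinner)

end MarkedCell

section MarkedCellL

variable {n : ℕ} (F : Set (Finset (Fin (n+1)))) (St : Finset (Fin (n+1)))
  {d : ℕ} (hcard : St.card = d + 1)
  (cert1 : ∀ x ∈ St, x ≠ St.orderEmbOfFin hcard 0 → ∃ M ∈ F, St.erase x ⊆ M)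
  (cert3 : ¬ ∃ M ∈ F, St.erase (St.orderEmbOfFin hcard 0) ⊆ M)
  (h01F : edgeCond F) (hn1 : 1 ≤ n)
  (hρ0 : ∀ i : Fin (d+1), i.val = 0 → (St.orderEmbOfFin hcard i).val = 0)
  (hρ1 : ∀ i : Fin (d+1), i.val = 1 → (St.orderEmbOfFin hcard i).val = 1)

include hρ0 hρ1 in
lemma cellHom_edge (hd1 : 1 ≤ d) :
    edge01Hom d hd1 ≫ cellHom St hcard = edge01Hom n hn1 := by
  apply SimplexCategory.Hom.ext
  apply OrderHom.ext
  funext j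
  apply Fin.ext
  show (St.orderEmbOfFin hcard ((edge01Hom d hd1).toOrderHom j)).val
    = ((edge01Hom n hn1).toOrderHom j).val
  have hj : ((edge01Hom d hd1).toOrderHom j).val = j.val := rfl
  have hj2 : ((edge01Hom n hn1).toOrderHom j).val = j.val := rfl
  obtain h | h : j.val = 0 ∨ j.val = 1 := by
    have h2 := j.isLt
    simp only [SimplexCategory.len_mk] at h2
    omega
  · rw [hj2, h]
    exact hρ0 _ (by rw [hj, h])
  · rw [hj2, h]
    exact hρ1 _ (by rw [hj, h])

include hρ0 hρ1 in
lemma push_edge (hd1 : 1 ≤ d) {m} (x : Δ[1].obj m) :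
    (pushCell St hcard).app m ((edge01 d hd1).app m x) = (edge01 n hn1).app m x := by
  show ULift.up ((x.down ≫ edge01Hom d hd1) ≫ cellHom St hcard)
    = ULift.up (x.down ≫ edge01Hom n hn1)
  rw [Category.assoc, cellHom_edge St hcard hn1 hρ0 hρ1 hd1]

include hcard cert1 hρ0 hρ1 in
/-- The `ℒ`-marked attaching map. -/
def attachMMark (hd2 : 2 ≤ d) :
    mkL (Λ[d, (0 : Fin (d+1))] : SSet.{0}) (edgeHorn d hd2) ⟶ mfam F h01F hn1 :=
  ⟨attachC F St hcard 0 cert1, by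
    rintro a (⟨x, rfl⟩ | ha)
    · exact Or.inl ⟨(attachC F St hcard 0 cert1).app _ x,
        (types_congr_hom ((attachC F St hcard 0 cert1).naturality _) x).symm⟩
    · replace ha := Set.mem_singleton_iff.mp ha
      subst ha
      refine Or.inr ?_
      refine Set.mem_singleton_iff.mpr ?_
      apply Subtype.ext
      show (pushCell St hcard).app _ ((edge01 d (by omega)).app _ (idSimplex ⦋1⦌))
        = (edge01 n hn1).app _ (idSimplex ⦋1⦌)
      exact push_edge St hcard hn1 hρ0 hρ1 _ _⟩

include hcard hρ0 hρ1 in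
/-- The `ℒ`-marked top cell map. -/
def topMMark (hd1 : 1 ≤ d) :
    mkL (Δ[d] : SSet.{0}) (edge01 d hd1) ⟶
      mfam (insert St F) (edgeCond_mono (Set.subset_insert St F) h01F) hn1 :=
  ⟨topC F St hcard, by
    rintro a (⟨x, rfl⟩ | ha)
    · exact Or.inl ⟨(topC F St hcard).app _ x,
        (types_congr_hom ((topC F St hcard).naturality _) x).symm⟩
    · replace ha := Set.mem_singleton_iff.mp ha
      subst ha
      refine Or.inr ?_
      refine Set.mem_singleton_iff.mpr ?_
      apply Subtype.ext
      show (pushCell St hcard).app _ ((edge01 d hd1).app _ (idSimplex ⦋1⦌))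
        = (edge01 n hn1).app _ (idSimplex ⦋1⦌)
      exact push_edge St hcard hn1 hρ0 hρ1 _ _⟩

include hcard cert1 cert3 hρ0 hρ1 in
lemma T_step_marked (T : MorphismProperty MSSet) (hsat : IsSaturatedClass T) (hd2 : 2 ≤ d)
    (hcell : T (mkLHom (Λ[d, 0].ι) (edgeHorn d hd2) (edge01 d (by omega))
      (edgeHorn_incl d hd2))) :
    T (mfamIncl (Set.subset_insert St F) h01F
        (edgeCond_mono (Set.subset_insert St F) h01F) hn1) := by
  have sq : attachMMark F St hcard cert1 h01F hn1 (hρ0 := hρ0) (hρ1 := hρ1) (hd2 := hd2) ≫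
        mfamIncl (Set.subset_insert St F) h01F
          (edgeCond_mono (Set.subset_insert St F) h01F) hn1
      = mkLHom (Λ[d, 0].ι) (edgeHorn d hd2) (edge01 d (by omega))
          (edgeHorn_incl d hd2)
        ≫ topMMark F St hcard h01F hn1 (hρ0 := hρ0) (hρ1 := hρ1) (hd1 := by omega) := by
    apply msetHom_ext
    intro m a
    apply Subtype.ext
    rfl
  have hco := Limits.PushoutCocone.IsColimit.mk sq
    (fun s' => descM F St hcard 0 cert1 cert3 h01F hn1 s'.pt s'.inl s'.inr.1
        (congrArg Subtype.val s'.condition))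
    (fun s' => msetHom_ext _ _ (fun m a =>
      types_congr_hom (congrArg (fun t => NatTrans.app t m)
        (desc_fac_inl F St hcard 0 cert1 cert3 s'.inl.1 s'.inr.1
          (congrArg Subtype.val s'.condition))) a))
    (fun s' => msetHom_ext _ _ (fun m a =>
      types_congr_hom (congrArg (fun t => NatTrans.app t m)
        (desc_fac_inr F St hcard 0 cert1 cert3 s'.inl.1 s'.inr.1
          (congrArg Subtype.val s'.condition))) a))
    (fun s' mC h1 h2 => msetHom_ext _ _ (fun m a =>
      types_congr_hom (congrArg (fun t => NatTrans.app t m)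
        (desc_uniq F St hcard 0 cert1 cert3 s'.inl.1 s'.inr.1
          (congrArg Subtype.val s'.condition) mC.1
          (congrArg Subtype.val h1) (congrArg Subtype.val h2))) a))
  exact hsat.1 _ _ _ _ (IsPushout.of_isColimit hco) hcell

end MarkedCellL

/-! #### The combinatorial filtration -/

section Combinatorics

variable (n : ℕ)

def pair01 : Finset (Fin (n+1)) := Finset.univ.filter (fun x => x.val ≤ 1)

def e0 : Finset (Fin (n+1)) := Finset.univ.filter (fun x => x.val = 0 ∨ x.val = 2)

def adj (i : ℕ) : Finset (Fin (n+1)) :=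
  Finset.univ.filter (fun x => x.val = i + 1 ∨ x.val = i + 2)

def V1 : Finset (Fin (n+1)) := Finset.univ.filter (fun x => x.val ≠ 1)

def wSet (j : ℕ) : Finset (Fin (n+1)) :=
  Finset.univ.filter (fun y => y.val ≠ 1 ∧ y.val ≤ j)

/-- The starting family: the marked edge `{0,1}` together with the spine of `d₁Δⁿ`. -/
def F0 : Set (Finset (Fin (n+1))) :=
  {M | M = pair01 n ∨ M = e0 n ∨ ∃ i, 1 ≤ i ∧ i + 2 ≤ n ∧ M = adj n i}

variable {n}

lemma mem_pair01 {x : Fin (n+1)} : x ∈ pair01 n ↔ x.val ≤ 1 := by simp [pair01]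
lemma mem_e0 {x : Fin (n+1)} : x ∈ e0 n ↔ x.val = 0 ∨ x.val = 2 := by simp [e0]
lemma mem_adj {i : ℕ} {x : Fin (n+1)} : x ∈ adj n i ↔ x.val = i + 1 ∨ x.val = i + 2 := by
  simp [adj]
lemma mem_V1 {x : Fin (n+1)} : x ∈ V1 n ↔ x.val ≠ 1 := by simp [V1]
lemma mem_wSet {j : ℕ} {x : Fin (n+1)} : x ∈ wSet n j ↔ x.val ≠ 1 ∧ x.val ≤ j := by
  simp [wSet]

variable (n)

def jA (S : Finset (Fin (n+1))) : ℕ := (S.sup (fun x => x.val)) - 1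

def isATop (S : Finset (Fin (n+1))) : Prop :=
  (∀ x ∈ S, x.val ≠ 1) ∧ 2 ≤ jA n S ∧ (∃ x ∈ S, x.val = jA n S) ∧
    (∃ x ∈ S, x.val = jA n S + 1) ∧ (∃ x ∈ S, x.val < jA n S)

def isBTop (S : Finset (Fin (n+1))) : Prop :=
  (∃ x ∈ S, x.val = 0) ∧ (∃ x ∈ S, x.val = 1) ∧ 3 ≤ S.card ∧ S ≠ Finset.univ

def isTop (S : Finset (Fin (n+1))) : Prop := isATop n S ∨ isBTop n S

open Classical in
noncomputable def rank (S : Finset (Fin (n+1))) : ℕ :=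
  (if ∃ x ∈ S, x.val = 1 then n else jA n S) * (n + 3) + S.card

variable {n}

lemma card_le_fin (S : Finset (Fin (n+1))) : S.card ≤ n + 1 := by
  have h := Finset.card_le_univ S
  rwa [Fintype.card_fin] at h

lemma sup_eq {M : Finset (Fin (n+1))} {v : ℕ} (hub : ∀ y ∈ M, y.val ≤ v)
    (hmem : ∃ y ∈ M, y.val = v) : M.sup (fun x => x.val) = v := by
  refine le_antisymm (Finset.sup_le hub) ?_
  obtain ⟨y, hy, hv⟩ := hmem
  exact hv ▸ Finset.le_sup (f := fun x : Fin (n+1) => x.val) hy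

lemma isATop_mk {M : Finset (Fin (n+1))} {j : ℕ} (hj : 2 ≤ j)
    (hno1 : ∀ y ∈ M, y.val ≠ 1) (hub : ∀ y ∈ M, y.val ≤ j + 1)
    (hj0 : ∃ y ∈ M, y.val = j) (hj1 : ∃ y ∈ M, y.val = j + 1)
    (hlt : ∃ y ∈ M, y.val < j) : isATop n M ∧ jA n M = j := by
  have hsup : M.sup (fun x => x.val) = j + 1 := sup_eq hub hj1
  have hjA : jA n M = j := by rw [jA, hsup]; omega
  refine ⟨⟨hno1, by rw [hjA]; exact hj, by rw [hjA]; exact hj0, by rw [hjA]; exact hj1,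
    by rw [hjA]; exact hlt⟩, hjA⟩

lemma isATop_bound {S : Finset (Fin (n+1))} (h : isATop n S) :
    ∀ x ∈ S, x.val ≤ jA n S + 1 := by
  intro x hx
  obtain ⟨y, hy, hyv⟩ := h.2.2.2.1
  have hsup : jA n S + 1 ≤ S.sup (fun x => x.val) :=
    hyv ▸ Finset.le_sup (f := fun x : Fin (n+1) => x.val) hy
  have hle : x.val ≤ S.sup (fun x => x.val) :=
    Finset.le_sup (f := fun x : Fin (n+1) => x.val) hx
  have : jA n S = S.sup (fun x => x.val) - 1 := rfl
  omega

lemma jA_succ_le {S : Finset (Fin (n+1))} (h : isATop n S) : jA n S + 1 ≤ n := by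
  obtain ⟨y, _, hyv⟩ := h.2.2.2.1
  have := y.isLt
  omega

lemma rank_A {S : Finset (Fin (n+1))} (h1 : ∀ x ∈ S, x.val ≠ 1) :
    rank n S = jA n S * (n + 3) + S.card := by
  rw [rank, if_neg]
  rintro ⟨x, hx, hv⟩
  exact h1 x hx hv

lemma rank_B {S : Finset (Fin (n+1))} (h1 : ∃ x ∈ S, x.val = 1) :
    rank n S = n * (n + 3) + S.card := by
  rw [rank, if_pos h1]

lemma three_le_card {S : Finset (Fin (n+1))} {a b c : Fin (n+1)} (ha : a ∈ S) (hb : b ∈ S)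
    (hc : c ∈ S) (hab : a ≠ b) (hac : a ≠ c) (hbc : b ≠ c) : 3 ≤ S.card := by
  have hsub : ({a, b, c} : Finset (Fin (n+1))) ⊆ S := by
    intro x hx
    simp only [Finset.mem_insert, Finset.mem_singleton] at hx
    rcases hx with rfl | rfl | rfl <;> assumption
  have hcard : ({a, b, c} : Finset (Fin (n+1))).card = 3 := by
    rw [Finset.card_insert_of_notMem (by simp [hab, hac]),
      Finset.card_insert_of_notMem (by simp [hbc]), Finset.card_singleton]
  exact hcard ▸ Finset.card_le_card hsub

lemma isATop_card {S : Finset (Fin (n+1))} (h : isATop n S) : 3 ≤ S.card := by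
  obtain ⟨p, hpS, hpv⟩ := h.2.2.1
  obtain ⟨q, hqS, hqv⟩ := h.2.2.2.1
  obtain ⟨r, hrS, hrv⟩ := h.2.2.2.2
  have h2 := h.2.1
  exact three_le_card hpS hqS hrS (fun e => by rw [e] at hpv; omega)
    (fun e => by rw [e] at hpv; omega) (fun e => by rw [e] at hqv; omega)

lemma isBTop_ex2 {S : Finset (Fin (n+1))} (h : isBTop n S) : ∃ w ∈ S, 2 ≤ w.val := by
  obtain ⟨⟨z, hzS, hzv⟩, ⟨o, hoS, hov⟩, hc3, _⟩ := h
  have hne : ((S.erase z).erase o).Nonempty := by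
    rw [← Finset.card_pos, Finset.card_erase_of_mem
      (Finset.mem_erase.2 ⟨fun e => by rw [e] at hov; omega, hoS⟩),
      Finset.card_erase_of_mem hzS]
    omega
  obtain ⟨w, hw⟩ := hne
  obtain ⟨hwo, hw2⟩ := Finset.mem_erase.1 hw
  obtain ⟨hwz, hwS⟩ := Finset.mem_erase.1 hw2
  refine ⟨w, hwS, ?_⟩
  have h0 : w.val ≠ 0 := fun e => hwz (Fin.ext (by rw [e, hzv]))
  have h1 : w.val ≠ 1 := fun e => hwo (Fin.ext (by rw [e, hov]))
  omega

end Combinatorics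

/-! #### Certificates for attaching a top -/

lemma lex_lt {j j' c c' : ℕ} (K : ℕ) (hc : 0 < c') (hcK : c < K)
    (h : j < j' ∨ (j = j' ∧ c < c')) : j * K + c < j' * K + c' := by
  rcases h with h | ⟨rfl, h⟩
  · calc j * K + c < j * K + K := Nat.add_lt_add_left hcK _
      _ = (j + 1) * K := by ring
      _ ≤ j' * K := Nat.mul_le_mul_right K h
      _ ≤ j' * K + c' := Nat.le_add_right _ _
  · exact Nat.add_lt_add_left h _

lemma lex_le_cases {j j' c c' K : ℕ} (hc'K : c' < K)
    (hle : j' * K + c ≤ j * K + c') (hge : j ≤ j') : j' = j ∧ c ≤ c' := by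
  by_cases h : j' = j
  · subst h
    exact ⟨rfl, Nat.le_of_add_le_add_left hle⟩
  · exfalso
    have h1 : j + 1 ≤ j' := by omega
    have h2 : j * K + K ≤ j' * K := by
      calc j * K + K = (j + 1) * K := by ring
        _ ≤ j' * K := Nat.mul_le_mul_right K h1
    have h3 : j * K + K ≤ j * K + c' := by
      calc j * K + K ≤ j' * K := h2
        _ ≤ j' * K + c := Nat.le_add_right _ _
        _ ≤ j * K + c' := hle
    have hK : K ≤ c' := Nat.le_of_add_le_add_left h3
    omega

lemma certA1 {n : ℕ} {Fc : Set (Finset (Fin (n+1)))} {S : Finset (Fin (n+1))}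
    {p : Fin (n+1)} (hA : isATop n S) (hpval : p.val = jA n S)
    (hF0 : F0 n ⊆ Fc)
    (hlt : ∀ M, isTop n M → rank n M < rank n S → M ∈ Fc) :
    ∀ x ∈ S, x ≠ p → ∃ M ∈ Fc, S.erase x ⊆ M := by
  intro x hxS hxp
  obtain ⟨hno1, hj2, hjex, hjex1, hjexlt⟩ := id hA
  set j := jA n S with hjdef
  have hub := isATop_bound hA
  have hrankS : rank n S = j * (n+3) + S.card := rank_A hno1
  have hjn : j + 1 ≤ n := jA_succ_le hA
  have hcardS : S.card ≤ n + 1 := card_le_fin S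
  have hc3 := isATop_card hA
  by_cases hxv : x.val = j + 1
  · by_cases hj3 : 3 ≤ j
    · have hmk := isATop_mk (n := n) (M := wSet n j) (j := j - 1) (by omega)
        (fun y hy => (mem_wSet.1 hy).1)
        (fun y hy => by have h := (mem_wSet.1 hy).2; omega)
        ⟨⟨j-1, by omega⟩, mem_wSet.2 ⟨show j - 1 ≠ 1 by omega, show j - 1 ≤ j by omega⟩, rfl⟩
        ⟨⟨j, by omega⟩, mem_wSet.2 ⟨show j ≠ 1 by omega, le_rfl⟩, show j = j - 1 + 1 by omega⟩
        ⟨⟨0, by omega⟩, mem_wSet.2 ⟨show (0:ℕ) ≠ 1 by omega, show 0 ≤ j by omega⟩,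
          show (0:ℕ) < j - 1 by omega⟩
      refine ⟨wSet n j, hlt _ (Or.inl hmk.1) ?_, ?_⟩
      · rw [rank_A (fun y hy => (mem_wSet.1 hy).1), hmk.2, hrankS]
        exact lex_lt _ (by omega) (by have := card_le_fin (wSet n j); omega)
          (Or.inl (by omega))
      · intro y hy
        obtain ⟨hyx, hyS⟩ := Finset.mem_erase.1 hy
        refine mem_wSet.2 ⟨hno1 y hyS, ?_⟩
        have h1 := hub y hyS
        have h2 : y.val ≠ j + 1 := fun e => hyx (Fin.ext (by rw [e, hxv]))
        omega
    · refine ⟨e0 n, hF0 (Or.inr (Or.inl rfl)), ?_⟩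
      intro y hy
      obtain ⟨hyx, hyS⟩ := Finset.mem_erase.1 hy
      refine mem_e0.2 ?_
      have h1 := hub y hyS
      have h2 : y.val ≠ j + 1 := fun e => hyx (Fin.ext (by rw [e, hxv]))
      have h3 := hno1 y hyS
      omega
  · have hxj : x.val ≠ j := fun e => hxp (Fin.ext (by rw [e, hpval]))
    have hxlt : x.val < j := by have := hub x hxS; omega
    by_cases hex : ∃ y ∈ S.erase x, y.val < j
    · obtain ⟨q, hqS, hqv⟩ := hjex
      obtain ⟨r, hrS, hrv⟩ := hjex1
      have hqe : q ∈ S.erase x := Finset.mem_erase.2 ⟨fun e => by rw [e] at hqv; omega, hqS⟩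
      have hre : r ∈ S.erase x := Finset.mem_erase.2 ⟨fun e => by rw [e] at hrv; omega, hrS⟩
      have hmk := isATop_mk (n := n) (M := S.erase x) (j := j) hj2
        (fun y hy => hno1 y (Finset.mem_of_mem_erase hy))
        (fun y hy => hub y (Finset.mem_of_mem_erase hy))
        ⟨q, hqe, hqv⟩ ⟨r, hre, hrv⟩ hex
      refine ⟨S.erase x, hlt _ (Or.inl hmk.1) ?_, Finset.Subset.refl _⟩
      rw [rank_A (fun y hy => hno1 y (Finset.mem_of_mem_erase hy)), hmk.2, hrankS,
        Finset.card_erase_of_mem hxS]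
      exact lex_lt _ (by omega) (by omega) (Or.inr ⟨rfl, by omega⟩)
    · push_neg at hex
      refine ⟨adj n (j-1), hF0 (Or.inr (Or.inr ⟨j - 1, by omega, by omega, rfl⟩)), ?_⟩
      intro y hy
      obtain ⟨hyx, hyS⟩ := Finset.mem_erase.1 hy
      refine mem_adj.2 ?_
      have h1 := hub y hyS
      have h2 := hex y (Finset.mem_erase.2 ⟨hyx, hyS⟩)
      omega

lemma certA3 {n : ℕ} {Fc : Set (Finset (Fin (n+1)))} {S : Finset (Fin (n+1))}
    {p : Fin (n+1)} (hA : isATop n S) (hpS : p ∈ S) (hpval : p.val = jA n S)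
    (hchar : ∀ M ∈ Fc, M ∈ F0 n ∨ (isTop n M ∧ rank n M ≤ rank n S ∧ M ≠ S)) :
    ¬ ∃ M ∈ Fc, S.erase p ⊆ M := by
  rintro ⟨M, hM, hsub⟩
  obtain ⟨hno1, hj2, hjex, hjex1, hjexlt⟩ := id hA
  set j := jA n S with hjdef
  obtain ⟨xM, hxMS, hxMv⟩ := hjex1
  obtain ⟨xl, hxlS, hxlv⟩ := hjexlt
  have hxM_M : xM ∈ M := hsub (Finset.mem_erase.2 ⟨fun e => by rw [e] at hxMv; omega, hxMS⟩)
  have hxl_M : xl ∈ M := hsub (Finset.mem_erase.2 ⟨fun e => by rw [e] at hxlv; omega, hxlS⟩)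
  have hjn := jA_succ_le hA
  have hcardS := card_le_fin S
  rcases hchar M hM with hMF0 | ⟨hMtop, hMrank, hMne⟩
  · rcases hMF0 with rfl | rfl | ⟨i, hi1, hi2, rfl⟩
    · have := mem_pair01.1 hxM_M; omega
    · have := mem_e0.1 hxM_M; omega
    · have h1 := mem_adj.1 hxM_M
      have h2 := mem_adj.1 hxl_M
      omega
  · rcases hMtop with hMA | hMB
    · have hubM := isATop_bound hMA
      have h1 := hubM xM hxM_M
      have hgej : j ≤ jA n M := by omega
      have hrM : rank n M = jA n M * (n+3) + M.card := rank_A hMA.1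
      have hrS : rank n S = j * (n+3) + S.card := rank_A hno1
      rw [hrM, hrS] at hMrank
      obtain ⟨hjeq, hcle⟩ := lex_le_cases (by omega) hMrank hgej
      obtain ⟨q, hqM, hqv⟩ := hMA.2.2.1
      have hq : q = p := Fin.ext (by rw [hqv, hjeq]; exact hpval.symm)
      have hSM : S ⊆ M := by
        intro y hyS
        by_cases hyp : y = p
        · rw [hyp, ← hq]; exact hqM
        · exact hsub (Finset.mem_erase.2 ⟨hyp, hyS⟩)
      exact hMne (Finset.eq_of_subset_of_card_le hSM (by omega)).symm
    · have hrM : rank n M = n * (n+3) + M.card := rank_B hMB.2.1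
      have hrS : rank n S = j * (n+3) + S.card := rank_A hno1
      rw [hrM, hrS] at hMrank
      obtain ⟨hjeq, -⟩ := lex_le_cases (by omega) hMrank (by omega)
      omega

lemma certB1 {n : ℕ} (hn3 : 3 ≤ n) {Fc : Set (Finset (Fin (n+1)))} {S : Finset (Fin (n+1))}
    {p : Fin (n+1)} (hB : isBTop n S) (hpval : p.val = 0)
    (hF0 : F0 n ⊆ Fc)
    (hlt : ∀ M, isTop n M → rank n M < rank n S → M ∈ Fc) :
    ∀ x ∈ S, x ≠ p → ∃ M ∈ Fc, S.erase x ⊆ M := by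
  intro x hxS hxp
  obtain ⟨⟨z, hzS, hzv⟩, ⟨o, hoS, hov⟩, hc3, hSuniv⟩ := id hB
  have hrS : rank n S = n * (n+3) + S.card := rank_B ⟨o, hoS, hov⟩
  have hcardS := card_le_fin S
  have hxv0 : x.val ≠ 0 := fun e => hxp (Fin.ext (by rw [e, hpval]))
  by_cases hx1 : x.val = 1
  · have hmk := isATop_mk (n := n) (M := V1 n) (j := n - 1) (by omega)
      (fun y hy => mem_V1.1 hy)
      (fun y hy => by have := y.isLt; omega)
      ⟨⟨n-1, by omega⟩, mem_V1.2 (show n - 1 ≠ 1 by omega), rfl⟩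
      ⟨⟨n, by omega⟩, mem_V1.2 (show n ≠ 1 by omega), show n = n - 1 + 1 by omega⟩
      ⟨⟨0, by omega⟩, mem_V1.2 (show (0:ℕ) ≠ 1 by omega), show (0:ℕ) < n - 1 by omega⟩
    refine ⟨V1 n, hlt _ (Or.inl hmk.1) ?_, ?_⟩
    · rw [rank_A (fun y hy => mem_V1.1 hy), hmk.2, hrS]
      exact lex_lt _ (by omega) (by have := card_le_fin (V1 n); omega) (Or.inl (by omega))
    · intro y hy
      obtain ⟨hyx, hyS⟩ := Finset.mem_erase.1 hy
      exact mem_V1.2 (fun e => hyx (Fin.ext (by rw [e, hx1])))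
  · by_cases hey : ∃ y ∈ S.erase x, 2 ≤ y.val
    · obtain ⟨w, hwe, hw2⟩ := hey
      have hze : z ∈ S.erase x :=
        Finset.mem_erase.2 ⟨fun e => by rw [e] at hzv; omega, hzS⟩
      have hoe : o ∈ S.erase x :=
        Finset.mem_erase.2 ⟨fun e => by rw [e] at hov; omega, hoS⟩
      have hcards : (S.erase x).card = S.card - 1 := Finset.card_erase_of_mem hxS
      have hBtop : isBTop n (S.erase x) := by
        refine ⟨⟨z, hze, hzv⟩, ⟨o, hoe, hov⟩, ?_, ?_⟩
        · exact three_le_card hze hoe hwe (fun e => by rw [e] at hzv; omega)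
            (fun e => by rw [e] at hzv; omega) (fun e => by rw [e] at hov; omega)
        · intro e
          have he := congrArg Finset.card e
          rw [hcards, Finset.card_univ, Fintype.card_fin] at he
          omega
      refine ⟨S.erase x, hlt _ (Or.inr hBtop) ?_, Finset.Subset.refl _⟩
      rw [rank_B ⟨o, hoe, hov⟩, hrS, hcards]
      exact lex_lt _ (by omega) (by omega) (Or.inr ⟨rfl, by omega⟩)
    · push_neg at hey
      refine ⟨pair01 n, hF0 (Or.inl rfl), ?_⟩
      intro y hy
      have := hey y hy
      exact mem_pair01.2 (by omega)

lemma certB3 {n : ℕ} {Fc : Set (Finset (Fin (n+1)))} {S : Finset (Fin (n+1))}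
    {p : Fin (n+1)} (hB : isBTop n S) (hpS : p ∈ S) (hpval : p.val = 0)
    (hchar : ∀ M ∈ Fc, M ∈ F0 n ∨ (isTop n M ∧ rank n M ≤ rank n S ∧ M ≠ S)) :
    ¬ ∃ M ∈ Fc, S.erase p ⊆ M := by
  rintro ⟨M, hM, hsub⟩
  obtain ⟨⟨z, hzS, hzv⟩, ⟨o, hoS, hov⟩, hc3, hSuniv⟩ := id hB
  obtain ⟨w, hwS, hw2⟩ := isBTop_ex2 hB
  have hcardS := card_le_fin S
  have ho_M : o ∈ M := hsub (Finset.mem_erase.2 ⟨fun e => by rw [e] at hov; omega, hoS⟩)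
  have hw_M : w ∈ M := hsub (Finset.mem_erase.2 ⟨fun e => by rw [e] at hw2; omega, hwS⟩)
  rcases hchar M hM with hMF0 | ⟨hMtop, hMrank, hMne⟩
  · rcases hMF0 with rfl | rfl | ⟨i, hi1, hi2, rfl⟩
    · have := mem_pair01.1 hw_M; omega
    · have := mem_e0.1 ho_M; omega
    · have := mem_adj.1 ho_M; omega
  · rcases hMtop with hMA | hMB
    · exact hMA.1 o ho_M hov
    · have hrM := rank_B hMB.2.1
      have hrS := rank_B (S := S) ⟨o, hoS, hov⟩
      rw [hrM, hrS] at hMrank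
      have hcle : M.card ≤ S.card := Nat.le_of_add_le_add_left hMrank
      obtain ⟨q, hqM, hqv⟩ := hMB.1
      have hq : q = p := Fin.ext (by rw [hqv, hpval])
      have hSM : S ⊆ M := by
        intro y hyS
        by_cases hyp : y = p
        · rw [hyp, ← hq]; exact hqM
        · exact hsub (Finset.mem_erase.2 ⟨hyp, hyS⟩)
      exact hMne (Finset.eq_of_subset_of_card_le hSM hcle).symm

lemma T_attach_top {n : ℕ} (hn3 : 3 ≤ n) (T : MorphismProperty MSSet)
    (hsat : IsSaturatedClass T)
    (hflat : ∀ ⦃A B : SSet.{0}⦄ (v : A ⟶ B), IsInnerAnodyne v → T (flatHom v))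
    (IH : ∀ (m : ℕ) (hm : 2 ≤ m), m < n →
      T (mkLHom (Λ[m, 0].ι) (edgeHorn m hm) (edge01 m (by omega))
        (edgeHorn_incl m hm)))
    (Fc : Set (Finset (Fin (n+1)))) (S : Finset (Fin (n+1))) (hS : isTop n S)
    (hF0 : F0 n ⊆ Fc)
    (hchar : ∀ M ∈ Fc, M ∈ F0 n ∨ (isTop n M ∧ rank n M ≤ rank n S ∧ M ≠ S))
    (hlt : ∀ M, isTop n M → rank n M < rank n S → M ∈ Fc)
    (h01 : edgeCond Fc) (hn1 : 1 ≤ n) :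
    T (mfamIncl (Set.subset_insert S Fc) h01
        (edgeCond_mono (Set.subset_insert S Fc) h01) hn1) := by
  rcases hS with hA | hB
  · obtain ⟨q, hqS, hqv⟩ := hA.2.2.1
    have hc3 := isATop_card hA
    have hcard : S.card = (S.card - 1) + 1 := by omega
    set d := S.card - 1 with hd
    set k : Fin (d+1) := (S.orderIsoOfFin hcard).symm ⟨q, hqS⟩ with hk
    have hkq : S.orderEmbOfFin hcard k = q := emb_symm_apply S hcard _
    obtain ⟨xM, hxMS, hxMv⟩ := hA.2.2.2.1
    obtain ⟨xl, hxlS, hxlv⟩ := hA.2.2.2.2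
    have hk0 : 0 < k.val := by
      by_contra h0
      have hkz : k = ⟨0, by omega⟩ := Fin.ext (show k.val = 0 by omega)
      have hxlr : xl ∈ Set.range ⇑(S.orderEmbOfFin hcard) := by
        rw [Finset.range_orderEmbOfFin]; exact hxlS
      obtain ⟨i, hi⟩ := hxlr
      have hmon : S.orderEmbOfFin hcard k ≤ S.orderEmbOfFin hcard i := by
        apply (S.orderEmbOfFin hcard).monotone
        rw [hkz]
        exact Fin.le_def.2 (show (0:ℕ) ≤ i.val by omega)
      rw [hkq, hi] at hmon
      have := Fin.le_def.1 hmon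
      omega
    have hkd : k.val < d := by
      by_contra h0
      have hkl : k = ⟨d, by omega⟩ := Fin.ext (show k.val = d by have := k.isLt; omega)
      have hxMr : xM ∈ Set.range ⇑(S.orderEmbOfFin hcard) := by
        rw [Finset.range_orderEmbOfFin]; exact hxMS
      obtain ⟨i, hi⟩ := hxMr
      have hmon : S.orderEmbOfFin hcard i ≤ S.orderEmbOfFin hcard k := by
        apply (S.orderEmbOfFin hcard).monotone
        rw [hkl]
        exact Fin.le_def.2 (show i.val ≤ d by have := i.isLt; omega)
      rw [hkq, hi] at hmon
      have := Fin.le_def.1 hmon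
      omega
    have cert1 : ∀ x ∈ S, x ≠ S.orderEmbOfFin hcard k → ∃ M ∈ Fc, S.erase x ⊆ M := by
      intro x hxS hxk
      exact certA1 hA hqv hF0 hlt x hxS (by rwa [hkq] at hxk)
    have cert3 : ¬ ∃ M ∈ Fc, S.erase (S.orderEmbOfFin hcard k) ⊆ M := by
      rw [hkq]
      exact certA3 hA hqS hqv hchar
    exact T_step_flat Fc S hcard k cert1 cert3 h01 hn1 T hsat hflat hk0 hkd
  · obtain ⟨⟨z, hzS, hzv⟩, ⟨o, hoS, hov⟩, hc3, hSuniv⟩ := id hB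
    have hcard : S.card = (S.card - 1) + 1 := by omega
    set d := S.card - 1 with hd
    have hd2 : 2 ≤ d := by omega
    have hdn : d < n := by
      have hlt' := (Finset.card_lt_iff_ne_univ S).2 hSuniv
      rw [Fintype.card_fin] at hlt'
      omega
    have hρ0 : ∀ i : Fin (d+1), i.val = 0 → (S.orderEmbOfFin hcard i).val = 0 := by
      intro i hi
      have hzr : z ∈ Set.range ⇑(S.orderEmbOfFin hcard) := by
        rw [Finset.range_orderEmbOfFin]; exact hzS
      obtain ⟨i0, hi0⟩ := hzr
      have hmon : S.orderEmbOfFin hcard i ≤ S.orderEmbOfFin hcard i0 :=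
        (S.orderEmbOfFin hcard).monotone (Fin.le_def.2 (by omega))
      rw [hi0] at hmon
      have := Fin.le_def.1 hmon
      omega
    have hρ1 : ∀ i : Fin (d+1), i.val = 1 → (S.orderEmbOfFin hcard i).val = 1 := by
      intro i hi
      have hor : o ∈ Set.range ⇑(S.orderEmbOfFin hcard) := by
        rw [Finset.range_orderEmbOfFin]; exact hoS
      obtain ⟨i1, hi1⟩ := hor
      have hi1v : i1.val ≠ 0 := by
        intro h
        have h2 := hρ0 i1 h
        rw [hi1] at h2
        omega
      have hmon : S.orderEmbOfFin hcard i ≤ S.orderEmbOfFin hcard i1 :=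
        (S.orderEmbOfFin hcard).monotone (Fin.le_def.2 (by omega))
      rw [hi1] at hmon
      have hle := Fin.le_def.1 hmon
      have hlt2 : (S.orderEmbOfFin hcard ⟨0, by omega⟩) < S.orderEmbOfFin hcard i :=
        (S.orderEmbOfFin hcard).strictMono (Fin.lt_def.2 (show (0:ℕ) < i.val by omega))
      have h0 := hρ0 ⟨0, by omega⟩ rfl
      have hlt2' := Fin.lt_def.1 hlt2
      omega
    have hp0 : (S.orderEmbOfFin hcard (0 : Fin (d+1))).val = 0 := hρ0 0 (Fin.val_zero _)
    have hpS : S.orderEmbOfFin hcard (0 : Fin (d+1)) ∈ S := Finset.orderEmbOfFin_mem _ _ _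
    have cert1 := certB1 hn3 hB hp0 hF0 hlt
    have cert3 := certB3 hB hpS hp0 hchar
    exact T_step_marked Fc S hcard cert1 cert3 h01 hn1 hρ0 hρ1 T hsat hd2 (IH d hd2 hdn)

/-! #### The chain of families -/

def Gfam (n r : ℕ) : Set (Finset (Fin (n+1))) := F0 n ∪ {S | isTop n S ∧ rank n S < r}

lemma F0_sub_Gfam {n r : ℕ} : F0 n ⊆ Gfam n r := Set.subset_union_left

lemma Gfam_mono {n : ℕ} {r r' : ℕ} (h : r ≤ r') : Gfam n r ⊆ Gfam n r' := by
  rintro M (hM | ⟨h1, h2⟩)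
  · exact Or.inl hM
  · exact Or.inr ⟨h1, by omega⟩

lemma edge_F0 {n : ℕ} : edgeCond (F0 n) :=
  ⟨pair01 n, Or.inl rfl, fun x hx => mem_pair01.2 hx⟩

lemma h01G (n r : ℕ) : edgeCond (Gfam n r) := edgeCond_mono F0_sub_Gfam edge_F0

lemma T_mfamIncl_congr {T : MorphismProperty MSSet} {n : ℕ}
    {F G G' : Set (Finset (Fin (n+1)))}
    (hGG' : G = G') (hFG : F ⊆ G) (hFG' : F ⊆ G') (h01F : edgeCond F)
    (h01' : edgeCond G) (h01'' : edgeCond G') (hn1 : 1 ≤ n)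
    (h : T (mfamIncl hFG h01F h01' hn1)) : T (mfamIncl hFG' h01F h01'' hn1) := by
  subst hGG'
  exact h

open Classical in
lemma T_rank_step {n : ℕ} (hn3 : 3 ≤ n) (T : MorphismProperty MSSet)
    (hsat : IsSaturatedClass T)
    (hflat : ∀ ⦃A B : SSet.{0}⦄ (v : A ⟶ B), IsInnerAnodyne v → T (flatHom v))
    (IH : ∀ (m : ℕ) (hm : 2 ≤ m), m < n →
      T (mkLHom (Λ[m, 0].ι) (edgeHorn m hm) (edge01 m (by omega))
        (edgeHorn_incl m hm)))
    (hn1 : 1 ≤ n) (r : ℕ) :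
    T (mfamIncl (Gfam_mono (Nat.le_succ r)) (h01G n r) (h01G n (r+1)) hn1) := by
  have inner : ∀ E : Finset (Finset (Fin (n+1))),
      (∀ M ∈ E, isTop n M ∧ rank n M = r) →
      T (mfamIncl (Set.subset_union_left : Gfam n r ⊆ Gfam n r ∪ ↑E) (h01G n r)
          (edgeCond_mono Set.subset_union_left (h01G n r)) hn1) := by
    intro E
    induction E using Finset.induction_on with
    | empty =>
      intro _
      refine T_mfamIncl_congr
        (show Gfam n r = Gfam n r ∪ ↑(∅ : Finset (Finset (Fin (n+1)))) by simp)
        (subset_refl _) Set.subset_union_left (h01G n r) (h01G n r)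
        (edgeCond_mono Set.subset_union_left (h01G n r)) hn1 ?_
      rw [mfamIncl_id]
      exact id_mem_of_saturated hsat _
    | @insert S E hSE ih =>
      intro hins
      have hE : ∀ M ∈ E, isTop n M ∧ rank n M = r :=
        fun M hM => hins M (Finset.mem_insert_of_mem hM)
      have hSr := hins S (Finset.mem_insert_self S E)
      have h01cur : edgeCond (Gfam n r ∪ ↑E) :=
        edgeCond_mono Set.subset_union_left (h01G n r)
      have hchar : ∀ M ∈ Gfam n r ∪ ↑E,
          M ∈ F0 n ∨ (isTop n M ∧ rank n M ≤ rank n S ∧ M ≠ S) := by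
        rintro M (hM | hM)
        · rcases hM with hM | ⟨h1, h2⟩
          · exact Or.inl hM
          · exact Or.inr ⟨h1, by omega, fun e => by rw [e] at h2; omega⟩
        · have h1 := hE M (Finset.mem_coe.1 hM)
          exact Or.inr ⟨h1.1, by omega,
            fun e => hSE (Finset.mem_coe.1 (by rwa [e] at hM))⟩
      have hltc : ∀ M, isTop n M → rank n M < rank n S → M ∈ Gfam n r ∪ ↑E :=
        fun M ht hr => Or.inl (Or.inr ⟨ht, by omega⟩)
      have hstep := T_attach_top hn3 T hsat hflat IH (Gfam n r ∪ ↑E) S hSr.1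
        (F0_sub_Gfam.trans Set.subset_union_left) hchar hltc h01cur hn1
      have hcomp := comp_mem_of_saturated hsat _ _ (ih hE) hstep
      rw [mfamIncl_comp] at hcomp
      exact T_mfamIncl_congr
        (show insert S (Gfam n r ∪ ↑E) = Gfam n r ∪ ↑(insert S E) by
          rw [Finset.coe_insert, Set.union_insert])
        (Set.subset_union_left.trans (Set.subset_insert S (Gfam n r ∪ ↑E)))
        Set.subset_union_left (h01G n r)
        (edgeCond_mono (Set.subset_insert S (Gfam n r ∪ ↑E)) h01cur)
        (edgeCond_mono Set.subset_union_left (h01G n r)) hn1 hcomp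
  have houter := inner (Finset.univ.filter (fun S => isTop n S ∧ rank n S = r))
    (fun M hM => (Finset.mem_filter.1 hM).2)
  refine T_mfamIncl_congr ?_ Set.subset_union_left (Gfam_mono (Nat.le_succ r)) (h01G n r)
    (edgeCond_mono Set.subset_union_left (h01G n r)) (h01G n (r+1)) hn1 houter
  ext M
  constructor
  · rintro ((hM | ⟨h1, h2⟩) | hM)
    · exact Or.inl hM
    · exact Or.inr ⟨h1, by omega⟩
    · have h1 := (Finset.mem_filter.1 (Finset.mem_coe.1 hM)).2
      exact Or.inr ⟨h1.1, by omega⟩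
  · rintro (hM | ⟨h1, h2⟩)
    · exact Or.inl (Or.inl hM)
    · by_cases hr : rank n M < r
      · exact Or.inl (Or.inr ⟨h1, hr⟩)
      · exact Or.inr (Finset.mem_coe.2
          (Finset.mem_filter.2 ⟨Finset.mem_univ M, h1, by omega⟩))

lemma T_chain {n : ℕ} (hn3 : 3 ≤ n) (T : MorphismProperty MSSet)
    (hsat : IsSaturatedClass T)
    (hflat : ∀ ⦃A B : SSet.{0}⦄ (v : A ⟶ B), IsInnerAnodyne v → T (flatHom v))
    (IH : ∀ (m : ℕ) (hm : 2 ≤ m), m < n →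
      T (mkLHom (Λ[m, 0].ι) (edgeHorn m hm) (edge01 m (by omega))
        (edgeHorn_incl m hm)))
    (hn1 : 1 ≤ n) (r : ℕ) :
    T (mfamIncl (Gfam_mono (Nat.zero_le r)) (h01G n 0) (h01G n r) hn1) := by
  induction r with
  | zero =>
    show T (mfamIncl (subset_refl _) (h01G n 0) (h01G n 0) hn1)
    rw [mfamIncl_id]
    exact id_mem_of_saturated hsat _
  | succ r ihr =>
    have hcomp := comp_mem_of_saturated hsat _ _ ihr
      (T_rank_step hn3 T hsat hflat IH hn1 r)
    rw [mfamIncl_comp] at hcomp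
    exact hcomp

lemma rank_lt_rmax {n : ℕ} {M : Finset (Fin (n+1))} (htop : isTop n M) :
    rank n M < n * (n+3) + (n+2) := by
  rcases htop with hA | hB
  · rw [rank_A hA.1]
    have h1 := jA_succ_le hA
    have h2 := card_le_fin M
    exact lex_lt _ (by omega) (by omega) (Or.inl (by omega))
  · rw [rank_B hB.2.1]
    have h2 := card_le_fin M
    exact Nat.add_lt_add_left (by omega) _

lemma V1_isATop {n : ℕ} (hn3 : 3 ≤ n) : isATop n (V1 n) ∧ jA n (V1 n) = n - 1 :=
  isATop_mk (by omega) (fun y hy => mem_V1.1 hy) (fun y hy => by have := y.isLt; omega)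
    ⟨⟨n-1, by omega⟩, mem_V1.2 (show n - 1 ≠ 1 by omega), rfl⟩
    ⟨⟨n, by omega⟩, mem_V1.2 (show n ≠ 1 by omega), show n = n - 1 + 1 by omega⟩
    ⟨⟨0, by omega⟩, mem_V1.2 (show (0:ℕ) ≠ 1 by omega), show (0:ℕ) < n - 1 by omega⟩

/-! #### Identification of the endpoints -/

lemma cond_G0_iff {n : ℕ} (hn2 : 2 ≤ n) {m} (a : Δ[n].obj m) :
    ((∀ j, ((SSet.stdSimplex.asOrderHom a) j : ℕ) ≤ 1) ∨
     (∀ j, ((SSet.stdSimplex.asOrderHom a) j : ℕ) = 0 ∨ ((SSet.stdSimplex.asOrderHom a) j : ℕ) = 2) ∨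
     (∃ i : ℕ, 2 ≤ i ∧
       ∀ j, ((SSet.stdSimplex.asOrderHom a) j : ℕ) = i ∨ ((SSet.stdSimplex.asOrderHom a) j : ℕ) = i + 1))
    ↔ cond (Gfam n 0) a := by
  constructor
  · rintro (h | h | ⟨i, hi2, h⟩)
    · exact ⟨pair01 n, Or.inl (Or.inl rfl), fun j => mem_pair01.2 (h j)⟩
    · exact ⟨e0 n, Or.inl (Or.inr (Or.inl rfl)), fun j => mem_e0.2 (h j)⟩
    · by_cases hin : i + 1 ≤ n
      · refine ⟨adj n (i-1), Or.inl (Or.inr (Or.inr ⟨i-1, by omega, by omega, rfl⟩)),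
          fun j => mem_adj.2 ?_⟩
        have := h j
        omega
      · by_cases hn3 : 3 ≤ n
        · refine ⟨adj n (n-2), Or.inl (Or.inr (Or.inr ⟨n-2, by omega, by omega, rfl⟩)),
            fun j => mem_adj.2 ?_⟩
          have hj := h j
          have hjlt := (SSet.stdSimplex.asOrderHom a j).isLt
          omega
        · refine ⟨e0 n, Or.inl (Or.inr (Or.inl rfl)), fun j => mem_e0.2 ?_⟩
          have hj := h j
          have hjlt := (SSet.stdSimplex.asOrderHom a j).isLt
          omega
  · rintro ⟨M, hM, hmem⟩
    rcases hM with (rfl | rfl | ⟨i, hi1, hi2, rfl⟩) | ⟨htop, hr⟩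
    · exact Or.inl (fun j => mem_pair01.1 (hmem j))
    · exact Or.inr (Or.inl (fun j => mem_e0.1 (hmem j)))
    · exact Or.inr (Or.inr ⟨i+1, by omega,
        fun j => by have := mem_adj.1 (hmem j); omega⟩)
    · omega

lemma cond_Gmax_iff {n : ℕ} (hn3 : 3 ≤ n) {m} (a : Δ[n].obj m) :
    (Set.range ⇑(SSet.stdSimplex.asOrderHom a) ∪ {0} ≠ Set.univ)
      ↔ cond (Gfam n (n * (n+3) + (n+2))) a := by
  constructor
  · intro h
    obtain ⟨v, hv⟩ := (Set.ne_univ_iff_exists_notMem _).mp h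
    have hv0 : v.val ≠ 0 := fun e => hv (Set.mem_union_right _
      (Set.mem_singleton_iff.2 (Fin.ext (e.trans (Fin.val_zero _).symm))))
    have hvr : ∀ j, SSet.stdSimplex.asOrderHom a j ≠ v := fun j e => hv (Set.mem_union_left _ ⟨j, e⟩)
    by_cases hv1 : v.val = 1
    · have hmk := V1_isATop hn3
      refine ⟨V1 n, Or.inr ⟨Or.inl hmk.1, rank_lt_rmax (Or.inl hmk.1)⟩,
        fun j => mem_V1.2 ?_⟩
      intro e
      exact hvr j (Fin.ext (by rw [e, hv1]))
    · by_cases hall : ∀ j, (SSet.stdSimplex.asOrderHom a j).val ≤ 1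
      · exact ⟨pair01 n, Or.inl (Or.inl rfl), fun j => mem_pair01.2 (hall j)⟩
      · push_neg at hall
        obtain ⟨j0, hj0⟩ := hall
        set M := insert (⟨0, by omega⟩ : Fin (n+1)) (insert (⟨1, by omega⟩ : Fin (n+1))
          (Finset.image (SSet.stdSimplex.asOrderHom a) Finset.univ)) with hMdef
        have h0M : (⟨0, by omega⟩ : Fin (n+1)) ∈ M := Finset.mem_insert_self _ _
        have h1M : (⟨1, by omega⟩ : Fin (n+1)) ∈ M :=
          Finset.mem_insert_of_mem (Finset.mem_insert_self _ _)
        have hjM : ∀ j, SSet.stdSimplex.asOrderHom a j ∈ M := fun j =>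
          Finset.mem_insert_of_mem (Finset.mem_insert_of_mem
            (Finset.mem_image.2 ⟨j, Finset.mem_univ j, rfl⟩))
        have hBtop : isBTop n M := by
          refine ⟨⟨_, h0M, rfl⟩, ⟨_, h1M, rfl⟩, ?_, ?_⟩
          · exact three_le_card h0M h1M (hjM j0)
              (fun e => by have := congrArg Fin.val e; simp at this)
              (fun e => by have := congrArg Fin.val e; simp at this; omega)
              (fun e => by have := congrArg Fin.val e; simp at this; omega)
          · intro e
            have hvM : v ∈ M := e ▸ Finset.mem_univ v
            rcases Finset.mem_insert.1 hvM with h' | h'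
            · exact hv0 (congrArg Fin.val h')
            rcases Finset.mem_insert.1 h' with h2 | h2
            · exact hv1 (congrArg Fin.val h2)
            · obtain ⟨j, _, he⟩ := Finset.mem_image.1 h2
              exact hvr j he
        exact ⟨M, Or.inr ⟨Or.inr hBtop, rank_lt_rmax (Or.inr hBtop)⟩, hjM⟩
  · rintro ⟨M, hM, hmem⟩
    have hfind : ∃ v : Fin (n+1), v.val ≠ 0 ∧ v ∉ M := by
      rcases hM with (rfl | rfl | ⟨i, hi1, hi2, rfl⟩) | ⟨htop, -⟩
      · exact ⟨⟨2, by omega⟩, show (2:ℕ) ≠ 0 by omega,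
          fun h => by have := mem_pair01.1 h; simp at this⟩
      · exact ⟨⟨1, by omega⟩, show (1:ℕ) ≠ 0 by omega,
          fun h => by have := mem_e0.1 h; simp at this⟩
      · exact ⟨⟨1, by omega⟩, show (1:ℕ) ≠ 0 by omega,
          fun h => by have := mem_adj.1 h; simp at this; omega⟩
      · rcases htop with hA | hB
        · exact ⟨⟨1, by omega⟩, show (1:ℕ) ≠ 0 by omega, fun h => hA.1 _ h rfl⟩
        · obtain ⟨v, hvM⟩ : ∃ v, v ∉ M := by
            by_contra hc
            push_neg at hc
            exact hB.2.2.2 (Finset.eq_univ_iff_forall.2 hc)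
          refine ⟨v, ?_, hvM⟩
          obtain ⟨z, hz, hzv⟩ := hB.1
          intro e
          exact hvM (by rw [show v = z from Fin.ext (by rw [e, hzv])]; exact hz)
    obtain ⟨v, hv0, hvM⟩ := hfind
    intro huniv
    have hvin : v ∈ Set.range ⇑(SSet.stdSimplex.asOrderHom a) ∪ {0} := huniv ▸ Set.mem_univ v
    rcases hvin with ⟨j, hj⟩ | h'
    · exact hvM (hj ▸ hmem j)
    · exact hv0 ((congrArg Fin.val (Set.mem_singleton_iff.1 h')).trans (Fin.val_zero _))

/-! #### Endpoint morphisms and isomorphisms -/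

def lsToG0 {n : ℕ} (hn2 : 2 ≤ n) : leftSpine n ⟶ fam n (Gfam n 0) where
  app m := TypeCat.ofHom fun a => ⟨a.1, (cond_G0_iff hn2 a.1).1 a.2⟩
  naturality m m' φ := rfl

def g0ToLs {n : ℕ} (hn2 : 2 ≤ n) : fam n (Gfam n 0) ⟶ leftSpine n where
  app m := TypeCat.ofHom fun a => ⟨a.1, (cond_G0_iff hn2 a.1).2 a.2⟩
  naturality m m' φ := rfl

def lsIsoG0 {n : ℕ} (hn2 : 2 ≤ n) (hn1 : 1 ≤ n) :
    (mkL (leftSpine n) (edgeLeftSpine n hn1) : MSSet) ≅ mfam (Gfam n 0) (h01G n 0) hn1 where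
  hom := ⟨lsToG0 hn2, by
    rintro a (⟨x, rfl⟩ | ha)
    · exact Or.inl ⟨(lsToG0 hn2).app _ x,
        (types_congr_hom ((lsToG0 hn2).naturality _) x).symm⟩
    · replace ha := Set.mem_singleton_iff.mp ha
      subst ha
      exact Or.inr rfl⟩
  inv := ⟨g0ToLs hn2, by
    rintro a (⟨x, rfl⟩ | ha)
    · exact Or.inl ⟨(g0ToLs hn2).app _ x,
        (types_congr_hom ((g0ToLs hn2).naturality _) x).symm⟩
    · replace ha := Set.mem_singleton_iff.mp ha
      subst ha
      exact Or.inr rfl⟩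
  hom_inv_id := msetHom_ext _ _ (fun m a => Subtype.ext rfl)
  inv_hom_id := msetHom_ext _ _ (fun m a => Subtype.ext rfl)

def hornToGmax {n : ℕ} (hn3 : 3 ≤ n) :
    (Λ[n, 0] : SSet.{0}) ⟶ fam n (Gfam n (n * (n+3) + (n+2))) where
  app m := TypeCat.ofHom fun a => ⟨a.1, (cond_Gmax_iff hn3 a.1).1 a.2⟩
  naturality m m' φ := rfl

def gmaxToHorn {n : ℕ} (hn3 : 3 ≤ n) :
    fam n (Gfam n (n * (n+3) + (n+2))) ⟶ (Λ[n, 0] : SSet.{0}) where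
  app m := TypeCat.ofHom fun a => ⟨a.1, (cond_Gmax_iff hn3 a.1).2 a.2⟩
  naturality m m' φ := rfl

def hornIsoGmax {n : ℕ} (hn3 : 3 ≤ n) (hn2 : 2 ≤ n) (hn1 : 1 ≤ n) :
    (mkL (Λ[n, 0]) (edgeHorn n hn2) : MSSet)
      ≅ mfam (Gfam n (n * (n+3) + (n+2))) (h01G n _) hn1 where
  hom := ⟨hornToGmax hn3, by
    rintro a (⟨x, rfl⟩ | ha)
    · exact Or.inl ⟨(hornToGmax hn3).app _ x,
        (types_congr_hom ((hornToGmax hn3).naturality _) x).symm⟩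
    · replace ha := Set.mem_singleton_iff.mp ha
      subst ha
      exact Or.inr rfl⟩
  inv := ⟨gmaxToHorn hn3, by
    rintro a (⟨x, rfl⟩ | ha)
    · exact Or.inl ⟨(gmaxToHorn hn3).app _ x,
        (types_congr_hom ((gmaxToHorn hn3).naturality _) x).symm⟩
    · replace ha := Set.mem_singleton_iff.mp ha
      subst ha
      exact Or.inr rfl⟩
  hom_inv_id := msetHom_ext _ _ (fun m a => Subtype.ext rfl)
  inv_hom_id := msetHom_ext _ _ (fun m a => Subtype.ext rfl)

def lsHornHom {n : ℕ} (hn3 : 3 ≤ n) : leftSpine n ⟶ (Λ[n, 0] : SSet.{0}) where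
  app m := TypeCat.ofHom fun a => ⟨a.1, (cond_Gmax_iff hn3 a.1).2
    (cond_mono (Gfam_mono (Nat.zero_le _)) ((cond_G0_iff (by omega) a.1).1 a.2))⟩
  naturality m m' φ := rfl

/-! #### The case `n = 2` -/

lemma ls2_horn_iff {m} (a : Δ[2].obj m) :
    ((∀ j, ((SSet.stdSimplex.asOrderHom a) j : ℕ) ≤ 1) ∨
     (∀ j, ((SSet.stdSimplex.asOrderHom a) j : ℕ) = 0 ∨ ((SSet.stdSimplex.asOrderHom a) j : ℕ) = 2) ∨
     (∃ i : ℕ, 2 ≤ i ∧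
       ∀ j, ((SSet.stdSimplex.asOrderHom a) j : ℕ) = i ∨ ((SSet.stdSimplex.asOrderHom a) j : ℕ) = i + 1))
    ↔ Set.range ⇑(SSet.stdSimplex.asOrderHom a) ∪ {(0 : Fin 3)} ≠ Set.univ := by
  constructor
  · intro h huniv
    rcases h with h | h | ⟨i, hi2, h⟩
    · have hv : (⟨2, by omega⟩ : Fin 3) ∈ Set.range ⇑(SSet.stdSimplex.asOrderHom a) ∪ {(0 : Fin 3)} :=
        huniv ▸ Set.mem_univ _
      rcases hv with ⟨j, hj⟩ | hv
      · have h2 := congrArg Fin.val hj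
        have h3 := h j
        simp at h2
        omega
      · have := congrArg Fin.val (Set.mem_singleton_iff.1 hv)
        simp at this
    · have hv : (⟨1, by omega⟩ : Fin 3) ∈ Set.range ⇑(SSet.stdSimplex.asOrderHom a) ∪ {(0 : Fin 3)} :=
        huniv ▸ Set.mem_univ _
      rcases hv with ⟨j, hj⟩ | hv
      · have h2 := congrArg Fin.val hj
        have h3 := h j
        simp at h2
        omega
      · have := congrArg Fin.val (Set.mem_singleton_iff.1 hv)
        simp at this
    · have hv : (⟨1, by omega⟩ : Fin 3) ∈ Set.range ⇑(SSet.stdSimplex.asOrderHom a) ∪ {(0 : Fin 3)} :=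
        huniv ▸ Set.mem_univ _
      rcases hv with ⟨j, hj⟩ | hv
      · have h2 := congrArg Fin.val hj
        have h3 := h j
        have h4 := (SSet.stdSimplex.asOrderHom a j).isLt
        simp at h2
        omega
      · have := congrArg Fin.val (Set.mem_singleton_iff.1 hv)
        simp at this
  · intro h
    obtain ⟨v, hv⟩ := (Set.ne_univ_iff_exists_notMem _).mp h
    have hv0 : v.val ≠ 0 := fun e => hv (Set.mem_union_right _
      (Set.mem_singleton_iff.2 (Fin.ext (e.trans (Fin.val_zero _).symm))))
    have hvr : ∀ j, SSet.stdSimplex.asOrderHom a j ≠ v := fun j e => hv (Set.mem_union_left _ ⟨j, e⟩)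
    have hvlt := v.isLt
    by_cases hv1 : v.val = 1
    · refine Or.inr (Or.inl (fun j => ?_))
      have hne := hvr j
      have hlt := (SSet.stdSimplex.asOrderHom a j).isLt
      have hne1 : ((SSet.stdSimplex.asOrderHom a) j : ℕ) ≠ 1 := fun e => hne (Fin.ext (by rw [e, hv1]))
      omega
    · have hv2 : v.val = 2 := by omega
      refine Or.inl (fun j => ?_)
      have hne := hvr j
      have hlt := (SSet.stdSimplex.asOrderHom a j).isLt
      have hne2 : ((SSet.stdSimplex.asOrderHom a) j : ℕ) ≠ 2 := fun e => hne (Fin.ext (by rw [e, hv2]))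
      omega

def ls2Horn : leftSpine 2 ⟶ (Λ[2, 0] : SSet.{0}) where
  app m := TypeCat.ofHom fun a => ⟨a.1, (ls2_horn_iff a.1).1 a.2⟩
  naturality m m' φ := rfl

def horn2Ls : (Λ[2, 0] : SSet.{0}) ⟶ leftSpine 2 where
  app m := TypeCat.ofHom fun a => ⟨a.1, (ls2_horn_iff a.1).2 a.2⟩
  naturality m m' φ := rfl

end Thirteen


/-- let `T` be a saturated class of morphisms of marked simplicial sets, all
of whose underlying maps are monomorphisms, with the right cancellation property, containing
the flat-marked inner anodyne maps and the `L`-marked left spine inclusions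
`Ln ↪ Δⁿ` for `n ≥ 2`.  Then `T` contains all `L`-marked left horn inclusions
`Λⁿ₀ ↪ Δⁿ`, `n ≥ 2`. -/
theorem saturated_class_with_left_spines_contains_left_horns
    (T : MorphismProperty MSSet)
    (hmono : ∀ ⦃A B : MSSet⦄ (f : A ⟶ B), T f → Mono f.1)
    (hsat : IsSaturatedClass T)
    (hcancel : ∀ ⦃X Y Z : MSSet⦄ (u : X ⟶ Y) (v : Y ⟶ Z), T u → T (u ≫ v) → T v)
    (hflat : ∀ ⦃A B : SSet.{0}⦄ (v : A ⟶ B), IsInnerAnodyne v → T (flatHom v))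
    (hspine : ∀ (n : ℕ) (hn : 2 ≤ n),
      T (mkLHom (leftSpineIncl n) (edgeLeftSpine n (by omega)) (edge01 n (by omega))
        (edgeLeftSpine_incl n (by omega)))) :
    ∀ (n : ℕ) (hn : 2 ≤ n),
      T (mkLHom (Λ[n, 0].ι) (edgeHorn n hn) (edge01 n (by omega))
        (edgeHorn_incl n hn)) := by
  intro n
  induction n using Nat.strong_induction_on with
  | _ n IH =>
  intro hn
  by_cases hn3 : 3 ≤ n
  · have hn1 : 1 ≤ n := by omega
    have IH' : ∀ (m : ℕ) (hm : 2 ≤ m), m < n →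
        T (mkLHom (Λ[m, 0].ι) (edgeHorn m hm) (edge01 m (by omega))
          (edgeHorn_incl m hm)) := fun m hm hmn => IH m hmn hm
    have hchain := Thirteen.T_chain hn3 T hsat hflat IH' hn1 (n * (n+3) + (n+2))
    let u : (mkL (leftSpine n) (edgeLeftSpine n (by omega)) : MSSet) ⟶
        mkL (Λ[n, 0]) (edgeHorn n hn) :=
      mkLHom (Thirteen.lsHornHom hn3) (edgeLeftSpine n (by omega)) (edgeHorn n hn)
        (by apply NatTrans.ext; funext m; apply ConcreteCategory.hom_ext; intro a; exact Subtype.ext rfl)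
    have hu : T u := by
      refine mem_of_arrow_iso hsat u _ (Thirteen.lsIsoG0 hn hn1)
        (Thirteen.hornIsoGmax hn3 hn hn1) ?_ hchain
      exact Thirteen.msetHom_ext _ _ (fun m a => Subtype.ext rfl)
    refine hcancel u _ hu ?_
    have he : u ≫ mkLHom (Λ[n, 0].ι) (edgeHorn n hn) (edge01 n (by omega))
        (edgeHorn_incl n hn)
        = mkLHom (leftSpineIncl n) (edgeLeftSpine n (by omega)) (edge01 n (by omega))
          (edgeLeftSpine_incl n (by omega)) :=
      Thirteen.msetHom_ext _ _ (fun m a => rfl)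
    rw [he]
    exact hspine n hn
  · have hn2 : n = 2 := by omega
    subst hn2
    let u : (mkL (leftSpine 2) (edgeLeftSpine 2 (by omega)) : MSSet) ⟶
        mkL (Λ[2, 0]) (edgeHorn 2 hn) :=
      mkLHom Thirteen.ls2Horn (edgeLeftSpine 2 (by omega)) (edgeHorn 2 hn)
        (by apply NatTrans.ext; funext m; apply ConcreteCategory.hom_ext; intro a; exact Subtype.ext rfl)
    let w : (mkL (Λ[2, 0]) (edgeHorn 2 hn) : MSSet) ⟶
        mkL (leftSpine 2) (edgeLeftSpine 2 (by omega)) :=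
      mkLHom Thirteen.horn2Ls (edgeHorn 2 hn) (edgeLeftSpine 2 (by omega))
        (by apply NatTrans.ext; funext m; apply ConcreteCategory.hom_ext; intro a; exact Subtype.ext rfl)
    have hu : T u := iso_hom_mem_of_saturated hsat
      ⟨u, w, Thirteen.msetHom_ext _ _ (fun m a => Subtype.ext rfl),
        Thirteen.msetHom_ext _ _ (fun m a => Subtype.ext rfl)⟩
    refine hcancel u _ hu ?_
    have he : u ≫ mkLHom (Λ[2, 0].ι) (edgeHorn 2 hn) (edge01 2 (by omega))
        (edgeHorn_incl 2 hn)
        = mkLHom (leftSpineIncl 2) (edgeLeftSpine 2 (by omega)) (edge01 2 (by omega))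
          (edgeLeftSpine_incl 2 (by omega)) :=
      Thirteen.msetHom_ext _ _ (fun m a => rfl)
    rw [he]
    exact hspine 2 hn


end Paper
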